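/- arXiv:2103.14667 — 2 statements merged into one kernel-verified Lean document; each statement's English description precedes it below -/
import Mathlib

section
/- In the quotient graph G/∼₃CC obtained by contracting each 3-edge-connected component of G to a single vertex, no two distinct vertices are 3-edge-connected. -/
namespace TCW

/-- A multigraph: a type of vertices, a type of edges, and an incidence map
assigning to each edge its (unordered) pair of endpoints. -/
structure Multigraph (V E : Type) where
  inc : E → Sym2 V

namespace Multigraph

variable {V E : Type}

/-- The multigraph has no loops. -/
def Loopless (G : Multigraph V E) : Prop := ∀ e : E, ¬ (G.inc e).IsDiag

/-- Walks in a multigraph. -/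
inductive Walk (G : Multigraph V E) : V → V → Type where
  | nil (v : V) : Walk G v v
  | cons {u v w : V} (e : E) (he : G.inc e = s(u, v)) (tail : Walk G v w) : Walk G u w

namespace Walk

variable {G : Multigraph V E}

/-- The list of edges traversed by a walk. -/
def edges : ∀ {u v : V}, G.Walk u v → List E
  | _, _, .nil _ => []
  | _, _, .cons e _ p => e :: p.edges

/-- The list of vertices visited by a walk (in order). -/
def support : ∀ {u v : V}, G.Walk u v → List V
  | u, _, .nil _ => [u]
  | u, _, .cons _ _ p => u :: p.support

/-- A walk is a path if it visits no vertex twice. -/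
def IsPath {u v : V} (p : G.Walk u v) : Prop := p.support.Nodup

/-- A closed walk is a cycle if it is nonempty, repeats no edge, and its
vertices are pairwise distinct except for the common endpoint. -/
def IsCycle {u : V} (p : G.Walk u u) : Prop :=
  p.edges ≠ [] ∧ p.edges.Nodup ∧ p.support.tail.Nodup

end Walk

/-- Two walks are edge-disjoint if they share no edge. -/
def EdgeDisjoint {G : Multigraph V E} {u v u' v' : V}
    (p : G.Walk u v) (q : G.Walk u' v') : Prop :=
  ∀ e : E, e ∈ p.edges → e ∉ q.edges

/-- There exist three pairwise edge-disjoint paths from `u` to `v`. -/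
def ThreePaths (G : Multigraph V E) (u v : V) : Prop :=
  ∃ (p₁ p₂ p₃ : G.Walk u v), p₁.IsPath ∧ p₂.IsPath ∧ p₃.IsPath ∧
    EdgeDisjoint p₁ p₂ ∧ EdgeDisjoint p₁ p₃ ∧ EdgeDisjoint p₂ p₃

/-- `u` and `v` are 3-edge-connected: they are equal or joined by three
pairwise edge-disjoint paths. -/
def ThreeEC (G : Multigraph V E) (u v : V) : Prop := u = v ∨ ThreePaths G u v

/-- The set of edges crossing the vertex set `A` (i.e. the cut `δ(A)`). -/
def delta (G : Multigraph V E) (A : Set V) : Set E :=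
  {e | ∃ x y, G.inc e = s(x, y) ∧ x ∈ A ∧ y ∉ A}

/-- The edge sets of cycles of `G`. -/
def cycleSets (G : Multigraph V E) : Set (Set E) :=
  {C | ∃ (u : V) (p : G.Walk u u), p.IsCycle ∧ C = {e | e ∈ p.edges}}

/-- A cactus: any two distinct cycles are edge-disjoint (equivalently, every
2-connected block is a single edge or a cycle). -/
def IsCactus (G : Multigraph V E) : Prop :=
  ∀ C₁ ∈ G.cycleSets, ∀ C₂ ∈ G.cycleSets, C₁ ≠ C₂ → C₁ ∩ C₂ = ∅

/-- The quotient multigraph of `G` by a setoid on vertices: vertices are the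
equivalence classes, and every edge of `G` whose endpoints lie in different
classes gives one edge; edges inside a class are discarded. -/
def quot (G : Multigraph V E) (s : Setoid V) :
    Multigraph (Quotient s) {e : E // ¬ (Sym2.map (Quotient.mk s) (G.inc e)).IsDiag} :=
  ⟨fun e => Sym2.map (Quotient.mk s) (G.inc e.1)⟩

/-- The setoid of 3-edge-connectedness (its classes are the
3-edge-connected components). -/
def tccSetoid (G : Multigraph V E) : Setoid V := Relation.EqvGen.setoid (ThreeEC G)

/-- `H` is an immersion of `G`: vertices of `H` map injectively to vertices
of `G`, and edges of `H` map to pairwise edge-disjoint paths of `G`, the path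
of an edge connecting the images of its endpoints. -/
def IsImmersion {V₁ E₁ V₂ E₂ : Type} (H : Multigraph V₁ E₁) (G : Multigraph V₂ E₂) : Prop :=
  ∃ (f : V₁ → V₂) (P : E₁ → (u : V₂) × (v : V₂) × G.Walk u v),
    Function.Injective f ∧
    (∀ e : E₁, Sym2.map f (H.inc e) = s((P e).1, (P e).2.1)) ∧
    (∀ e : E₁, (P e).2.2.IsPath) ∧
    (∀ e₁ e₂ : E₁, e₁ ≠ e₂ → EdgeDisjoint (P e₁).2.2 (P e₂).2.2)

section Torso

variable (G : Multigraph V E) (A : Set V)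

/-- Two vertices outside `A` are related if joined by a walk avoiding `A`. -/
def compRel (x y : {v : V // v ∉ A}) : Prop :=
  ∃ p : G.Walk x.1 y.1, ∀ w ∈ p.support, w ∉ A

/-- The setoid whose classes are the connected components of `G - A`. -/
def compSetoid : Setoid {v : V // v ∉ A} := Relation.EqvGen.setoid (G.compRel A)

/-- The component `Z` of `G - A` is attached to the vertex `a ∈ A` by some edge. -/
def Attached (Z : Quotient (G.compSetoid A)) (a : {v : V // v ∈ A}) : Prop :=
  ∃ (e : E) (z : {v : V // v ∉ A}), Quotient.mk (G.compSetoid A) z = Z ∧ G.inc e = s(a.1, z.1)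

/-- Edges of `G` with both endpoints in `A`, recorded together with their
endpoints as vertices of the torso. -/
def InnerE : Type :=
  {q : E × Sym2 {v : V // v ∈ A} // G.inc q.1 = Sym2.map Subtype.val q.2}

/-- Replacement edges: one for each connected component of `G - A` having
exactly two (distinct) neighbours in `A`; its endpoints are those neighbours. -/
def RepE : Type :=
  {q : Quotient (G.compSetoid A) × Sym2 {v : V // v ∈ A} //
    ¬ q.2.IsDiag ∧ {a | a ∈ q.2} = {a | G.Attached A q.1 a}}

/-- The torso of `A` in `G`: keep the edges inside `A`, and for each
connected component of `G - A` with exactly two neighbours in `A`, add a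
replacement edge between those neighbours. -/
def torso : Multigraph {v : V // v ∈ A} (G.InnerE A ⊕ G.RepE A) :=
  ⟨Sum.elim (fun q => q.1.2) (fun q => q.1.2)⟩

end Torso

end Multigraph

open Multigraph

/-- A tree-cut decomposition of `G` with nodes `N`: a tree on `N` together
with a near-partition of the vertices of `G` into bags indexed by `N`. -/
structure TreeCutDecomp (G : Multigraph V E) (N : Type) where
  tree : SimpleGraph N
  isTree : tree.IsTree
  bag : N → Set V
  bag_disjoint : ∀ n₁ n₂ : N, n₁ ≠ n₂ → bag n₁ ∩ bag n₂ = ∅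
  bag_covers : ∀ v : V, ∃ t : N, v ∈ bag t

namespace TreeCutDecomp

variable {V E N : Type} {G : Multigraph V E}

/-- The adhesion of the tree edge `n₁n₂`: all edges of `G` whose endpoints lie
in bags of nodes in different components of the tree minus that edge. -/
def adhE (D : TreeCutDecomp G N) (n₁ n₂ : N) : Set E :=
  {e | ∃ (x y : V) (p q : N), G.inc e = s(x, y) ∧ x ∈ D.bag p ∧ y ∈ D.bag q ∧
    ¬ (D.tree.deleteEdges {s(n₁, n₂)}).Reachable p q}

/-- The adhesion of a node: the union of the adhesions of the bold
(adhesion of size at least 3) tree edges incident to it. -/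
def adhN (D : TreeCutDecomp G N) (t : N) : Set E :=
  {e | ∃ n : N, D.tree.Adj n t ∧ 3 ≤ (D.adhE n t).ncard ∧ e ∈ D.adhE n t}

/-- The decomposition has adhesion-width at most `a`. -/
def AdhWidthLE (D : TreeCutDecomp G N) (a : ℕ) : Prop := ∀ t : N, (D.adhN t).ncard ≤ a

/-- The decomposition has bag-width at most `b`. -/
def BagWidthLE (D : TreeCutDecomp G N) (b : ℕ) : Prop := ∀ t : N, (D.bag t).ncard ≤ b

/-- The adhesion-width: the maximum size of a node adhesion. -/
noncomputable def adhWidth [Fintype N] (D : TreeCutDecomp G N) : ℕ :=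
  Finset.univ.sup fun t : N => (D.adhN t).ncard

/-- The bag-width: the maximum size of a bag. -/
noncomputable def bagWidth [Fintype N] (D : TreeCutDecomp G N) : ℕ :=
  Finset.univ.sup fun t : N => (D.bag t).ncard

open Classical in
/-- GPRTW's width: the maximum over tree edges of the adhesion size, and over
nodes `t` of `|X_t|` plus the number of bold tree edges incident to `t`. -/
noncomputable def gprtwWidth [Fintype N] (D : TreeCutDecomp G N) : ℕ :=
  max
    (Finset.univ.sup fun p : N × N =>
      if D.tree.Adj p.1 p.2 then (D.adhE p.1 p.2).ncard else 0)
    (Finset.univ.sup fun t : N =>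
      (D.bag t).ncard + {n : N | D.tree.Adj n t ∧ 3 ≤ (D.adhE n t).ncard}.ncard)

end TreeCutDecomp

/-- A slab in `G`: a connected subgraph (given by its vertex and edge sets)
together with a nonempty core that is 3-edge-connected in `G`. -/
structure Slab (G : Multigraph V E) where
  verts : Set V
  edgeSet : Set E
  edge_mem : ∀ e ∈ edgeSet, ∀ x ∈ G.inc e, x ∈ verts
  conn : ∀ x ∈ verts, ∀ y ∈ verts, ∃ p : G.Walk x y,
    (∀ w ∈ p.support, w ∈ verts) ∧ (∀ e ∈ p.edges, e ∈ edgeSet)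
  core : Set V
  core_sub : core ⊆ verts
  core_nonempty : core.Nonempty
  core_tec : ∀ x ∈ core, ∀ y ∈ core, ThreeEC G x y

/-- A set `F` of edges disconnects a slab if two core vertices lie in
different components of the slab minus `F`. -/
def Slab.Disconnects {G : Multigraph V E} (F : Set E) (s : Slab G) : Prop :=
  ∃ x ∈ s.core, ∃ y ∈ s.core, ¬ ∃ p : G.Walk x y,
    (∀ w ∈ p.support, w ∈ s.verts) ∧ (∀ e ∈ p.edges, e ∈ s.edgeSet ∧ e ∉ F)

/-- A bramble: a family of pairwise touching slabs (cores pairwise intersect). -/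
def IsBramble {G : Multigraph V E} (B : Set (Slab G)) : Prop :=
  ∀ s₁ ∈ B, ∀ s₂ ∈ B, (s₁.core ∩ s₂.core).Nonempty

/-- The bramble has adhesion-order at least `a`: every edge set disconnecting
all its slabs has at least `a` edges. -/
def AdhOrderGE {G : Multigraph V E} (B : Set (Slab G)) (a : ℕ) : Prop :=
  ∀ F : Set E, (∀ s ∈ B, Slab.Disconnects F s) → a ≤ F.ncard

/-- The bramble has bag-order at least `b`: every core has at least `b` vertices. -/
def BagOrderGE {G : Multigraph V E} (B : Set (Slab G)) (b : ℕ) : Prop :=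
  ∀ s ∈ B, b ≤ s.core.ncard

/-- An `(a,b)`-tangle: a consistent orientation of all edge separations of
order `< a` avoiding the collection `Σ_{a,b}` of small stars. An oriented
separation `(A, B)` is represented by its first side `A` (so `B = Aᶜ`). -/
def IsTangle (G : Multigraph V E) (a b : ℕ) (L : Set (Set V)) : Prop :=
  (∀ A ∈ L, (G.delta A).ncard < a) ∧
  (∀ A : Set V, (G.delta A).ncard < a → (A ∈ L ↔ Aᶜ ∉ L)) ∧
  (∀ A ∈ L, ∀ C ∈ L, (Aᶜ ∩ Cᶜ).Nonempty) ∧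
  (∀ σ : Set (Set V), σ ⊆ L → σ.Nonempty →
    (∀ A ∈ σ, ∀ C ∈ σ, A ≠ C → A ∩ C = ∅) →
    ¬ ((⋃ A ∈ {A ∈ σ | 3 ≤ (G.delta A).ncard}, G.delta A).ncard < a ∧
       (⋂ A ∈ σ, Aᶜ).ncard < b))


/-! ### Auxiliary development for STATEMENT 3 -/

open scoped Classical

section MengerAux

open Multigraph

variable {V E : Type} {G : Multigraph V E}

namespace Multigraph.Walk

/-- The list of darts (edge with traversal direction) of a walk. -/
def dartList : ∀ {u v : V}, G.Walk u v → List (E × V × V)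
  | _, _, .nil _ => []
  | _, _, @Multigraph.Walk.cons _ _ _ u m _ e _ p => (e, u, m) :: p.dartList

@[simp] lemma dartList_nil (v : V) : (Walk.nil (G := G) v).dartList = [] := rfl
@[simp] lemma dartList_cons {u m w : V} (e : E) (he : G.inc e = s(u, m)) (p : G.Walk m w) :
    (Walk.cons e he p).dartList = (e, u, m) :: p.dartList := rfl

@[simp] lemma edges_nil (v : V) : (Walk.nil (G := G) v).edges = [] := rfl
@[simp] lemma edges_cons {u m w : V} (e : E) (he : G.inc e = s(u, m)) (p : G.Walk m w) :
    (Walk.cons e he p).edges = e :: p.edges := rfl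
@[simp] lemma support_nil (v : V) : (Walk.nil (G := G) v).support = [v] := rfl
@[simp] lemma support_cons {u m w : V} (e : E) (he : G.inc e = s(u, m)) (p : G.Walk m w) :
    (Walk.cons e he p).support = u :: p.support := rfl

lemma edges_eq_dart_map : ∀ {u v : V} (p : G.Walk u v), p.edges = p.dartList.map Prod.fst
  | _, _, .nil _ => rfl
  | _, _, .cons e he p => by simp [edges_eq_dart_map p]

/-- A walk from inside `A` to outside `A` crosses the cut. -/
lemma exists_cross {A : Set V} {a b : V} (p : G.Walk a b) :
    a ∈ A → b ∉ A → ∃ e ∈ p.edges, e ∈ G.delta A := by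
  induction p with
  | nil x => exact fun h1 h2 => absurd h1 h2
  | @cons a m b e he t ih =>
    intro h1 h2
    by_cases hm : m ∈ A
    · obtain ⟨e', he', hd⟩ := ih hm h2
      exact ⟨e', by simp [he'], hd⟩
    · exact ⟨e, by simp, ⟨a, m, he, h1, hm⟩⟩

/-- A walk from outside `A` to inside `A` crosses the cut. -/
lemma exists_cross' {A : Set V} {a b : V} (p : G.Walk a b) :
    a ∉ A → b ∈ A → ∃ e ∈ p.edges, e ∈ G.delta A := by
  induction p with
  | nil x => exact fun h1 h2 => absurd h2 h1
  | @cons a m b e he t ih =>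
    intro h1 h2
    by_cases hm : m ∈ A
    · exact ⟨e, by simp, ⟨m, a, by rw [he, Sym2.eq_swap], hm, h1⟩⟩
    · obtain ⟨e', he', hd⟩ := ih hm h2
      exact ⟨e', by simp [he'], hd⟩

/-- Every vertex on a walk has a suffix-walk to the end-vertex. -/
lemma exists_suffix_walk {a b : V} (p : G.Walk a b) :
    ∀ u ∈ p.support, ∃ q : G.Walk u b, q.support.IsSuffix p.support ∧ q.edges ⊆ p.edges := by
  induction p with
  | nil x =>
    intro u hu
    simp only [support_nil, List.mem_singleton] at hu
    subst hu
    exact ⟨Walk.nil _, List.suffix_refl _, by simp⟩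
  | @cons a m b e he t ih =>
    intro u hu
    simp only [support_cons, List.mem_cons] at hu
    by_cases hut : u ∈ t.support
    · obtain ⟨q, hs, hed⟩ := ih u hut
      refine ⟨q, hs.trans (List.suffix_cons _ _), fun x hx => by simp [hed hx]⟩
    · have hua : u = a := by tauto
      subst hua
      exact ⟨Walk.cons e he t, List.suffix_refl _, fun x hx => hx⟩

/-- Loop-erasure: every walk contains a path with the same endpoints. -/
lemma exists_bypass {a b : V} (p : G.Walk a b) :
    ∃ q : G.Walk a b, q.IsPath ∧ q.edges ⊆ p.edges := by
  induction p with
  | nil x => exact ⟨Walk.nil x, by simp [Walk.IsPath], by simp⟩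
  | @cons a m b e he t ih =>
    obtain ⟨q, hq, hed⟩ := ih
    by_cases ha : a ∈ q.support
    · obtain ⟨r, hs, hed'⟩ := exists_suffix_walk q a ha
      refine ⟨r, List.Nodup.sublist hs.sublist hq, fun x hx => by simp [hed (hed' hx)]⟩
    · refine ⟨Walk.cons e he q, ?_, ?_⟩
      · show (Walk.cons e he q).support.Nodup
        simp only [support_cons, List.nodup_cons]
        exact ⟨ha, hq⟩
      · intro x hx
        simp only [edges_cons, List.mem_cons] at hx ⊢
        rcases hx with rfl | hx
        · exact Or.inl rfl
        · exact Or.inr (hed hx)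

end Multigraph.Walk

/-- Net flow contribution of a dart at a vertex. -/
noncomputable def dnet (w : V) (d : E × V × V) : ℤ :=
  (if w = d.2.1 then 1 else 0) - (if w = d.2.2 then 1 else 0)

/-- Net flow of a dart list at a vertex. -/
noncomputable def netL (L : List (E × V × V)) (w : V) : ℤ := (L.map (dnet w)).sum

@[simp] lemma netL_nil (w : V) : netL ([] : List (E × V × V)) w = 0 := rfl

lemma netL_cons (d : E × V × V) (L : List (E × V × V)) (w : V) :
    netL (d :: L) w = dnet w d + netL L w := by simp [netL]

lemma netL_append (L M : List (E × V × V)) (w : V) :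
    netL (L ++ M) w = netL L w + netL M w := by simp [netL]

lemma netL_perm {L M : List (E × V × V)} (h : L.Perm M) (w : V) :
    netL L w = netL M w := (h.map _).sum_eq

/-- All darts in the list are darts of `G`. -/
def ValidD (G : Multigraph V E) (L : List (E × V × V)) : Prop :=
  ∀ d ∈ L, G.inc d.1 = s(d.2.1, d.2.2)

lemma netL_dartList {a b : V} (p : G.Walk a b) (w : V) :
    netL p.dartList w = (if w = a then 1 else 0) - (if w = b then 1 else 0) := by
  induction p with
  | nil x => simp
  | @cons a m b e he t ih =>
    simp only [Multigraph.Walk.dartList_cons, netL_cons, ih, dnet]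
    ring

lemma netL_nonpos {L : List (E × V × V)} {x : V} (h : ∀ d ∈ L, d.2.1 ≠ x) : netL L x ≤ 0 := by
  induction L with
  | nil => simp
  | cons d L ih =>
    rw [netL_cons]
    have h1 : x ≠ d.2.1 := fun hh => (h d (by simp)) hh.symm
    have h2 : dnet x d ≤ 0 := by
      simp only [dnet, if_neg h1, zero_sub, neg_nonpos]
      split <;> norm_num
    have h3 := ih (fun d' hd' => h d' (by simp [hd']))
    omega

lemma filter_perm_of_sub {L M : List (E × V × V)} (hnd : (L.map Prod.fst).Nodup)
    (hM : ∀ d ∈ M, d ∈ L) (hMnd : (M.map Prod.fst).Nodup) :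
    (L.filter fun d => decide (d.1 ∈ M.map Prod.fst)).Perm M := by
  classical
  rw [List.perm_ext_iff_of_nodup ((List.Nodup.of_map Prod.fst hnd).filter _)
    (List.Nodup.of_map Prod.fst hMnd)]
  intro d
  simp only [List.mem_filter, decide_eq_true_eq]
  constructor
  · rintro ⟨hdL, hfd⟩
    obtain ⟨d', hd', hfst⟩ := List.mem_map.1 hfd
    have hdd : d' = d := List.inj_on_of_nodup_map hnd (hM d' hd') hdL hfst
    exact hdd ▸ hd'
  · intro hdM
    exact ⟨hM d hdM, List.mem_map_of_mem (f := Prod.fst) hdM⟩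

/-- Trail extraction from a balanced dart list. -/
lemma exists_trail {v : V} :
    ∀ (n : ℕ) (L : List (E × V × V)), L.length ≤ n → ValidD G L →
      (L.map Prod.fst).Nodup →
      ∀ x : V, x ≠ v → (∀ w, w ≠ v → 0 ≤ netL L w) → 1 ≤ netL L x →
      ∃ p : G.Walk x v, p.edges.Nodup ∧ ∀ d ∈ p.dartList, d ∈ L := by
  classical
  intro n
  induction n with
  | zero =>
    intro L hlen _ _ x _ _ hx
    have hnil : L = [] := by cases L with
      | nil => rfl
      | cons a t => simp at hlen
    subst hnil
    simp at hx
  | succ n ih =>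
    intro L hlen hval hnd x hxv hpos hx
    have hex : ∃ d ∈ L, d.2.1 = x := by
      by_contra hc
      push_neg at hc
      have := netL_nonpos hc
      omega
    obtain ⟨d, hdL, hdx⟩ := hex
    obtain ⟨e, x', m⟩ := d
    have hxx : x = x' := hdx.symm
    subst hxx
    have he : G.inc e = s(x, m) := hval _ hdL
    by_cases hm : m = v
    · refine ⟨Walk.cons e (hm ▸ he) (Walk.nil v), by simp, ?_⟩
      intro d hd
      simp only [Multigraph.Walk.dartList_cons, Multigraph.Walk.dartList_nil,
        List.mem_singleton] at hd
      subst hd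
      exact hm ▸ hdL
    · set q : (E × V × V) → Bool := fun d => decide (d.1 ∈ [(e, x, m)].map Prod.fst) with hq
      have hqd : q (e, x, m) = true := by simp [hq]
      have hmnd : ([(e, x, m)].map Prod.fst).Nodup := by simp
      have hqperm : (L.filter q).Perm [(e, x, m)] :=
        filter_perm_of_sub hnd (by intro d hd; simp only [List.mem_singleton] at hd; exact hd ▸ hdL) hmnd
      have hsplit : ((L.filter q) ++ (L.filter fun d => !q d)).Perm L := List.filter_append_perm q L
      have hsub : (L.filter fun d => !q d).Sublist L := List.filter_sublist (l := L)
      have hval' : ValidD G (L.filter fun d => !q d) := fun d hd => hval d (hsub.subset hd)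
      have hnd' : ((L.filter fun d => !q d).map Prod.fst).Nodup :=
        List.Nodup.sublist (hsub.map Prod.fst) hnd
      have hlen' : (L.filter fun d => !q d).length ≤ n := by
        have h1 : ((L.filter q) ++ (L.filter fun d => !q d)).length = L.length := hsplit.length_eq
        have h2 : 1 ≤ (L.filter q).length :=
          List.length_pos_iff.2 (List.ne_nil_of_mem (List.mem_filter.2 ⟨hdL, hqd⟩))
        simp only [List.length_append] at h1
        omega
      have hnet : ∀ w, netL L w = dnet w (e, x, m) + netL (L.filter fun d => !q d) w := by
        intro w
        have h1 := netL_perm hsplit w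
        rw [netL_append] at h1
        have h2 : netL (L.filter q) w = dnet w (e, x, m) := by
          rw [netL_perm hqperm w, netL_cons, netL_nil]
          ring
        omega
      have hdnet : ∀ w, dnet w (e, x, m) =
          (if w = x then 1 else 0) - (if w = m then 1 else 0) := fun w => rfl
      have hpos' : ∀ w, w ≠ v → 0 ≤ netL (L.filter fun d => !q d) w := by
        intro w hw
        have h0 := hpos w hw
        have h1 := hnet w
        have h2 := hdnet w
        by_cases h3 : w = x
        · have h4 : dnet w (e, x, m) ≤ 1 := by rw [h2]; split <;> split <;> omega
          have h5 : 1 ≤ netL L w := by rw [h3]; exact hx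
          omega
        · have h4 : dnet w (e, x, m) ≤ 0 := by rw [h2, if_neg h3]; split <;> omega
          omega
      have hm1 : 1 ≤ netL (L.filter fun d => !q d) m := by
        have h1 := hnet m
        have h2 := hdnet m
        by_cases h3 : m = x
        · have h4 : dnet m (e, x, m) = 0 := by rw [h2, if_pos h3, if_pos rfl]; ring
          have h5 : 1 ≤ netL L m := by rw [h3]; exact hx
          omega
        · have h4 : dnet m (e, x, m) = -1 := by rw [h2, if_neg h3, if_pos rfl]; ring
          have h0 := hpos m hm
          omega
      obtain ⟨p', hpe', hpd'⟩ := ih (L.filter fun d => !q d) hlen' hval' hnd' m hm hpos' hm1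
      refine ⟨Walk.cons e he p', ?_, ?_⟩
      · simp only [Multigraph.Walk.edges_cons, List.nodup_cons]
        refine ⟨?_, hpe'⟩
        intro hmem
        rw [Multigraph.Walk.edges_eq_dart_map] at hmem
        obtain ⟨d', hd', hfst⟩ := List.mem_map.1 hmem
        have hd'L' := hpd' d' hd'
        have h6 := (List.mem_filter.1 hd'L').2
        rw [hq] at h6
        simp only [Bool.not_eq_true', decide_eq_false_iff_not, List.map_cons, List.map_nil,
          List.mem_singleton] at h6
        exact h6 hfst
      · intro d hd
        simp only [Multigraph.Walk.dartList_cons, List.mem_cons] at hd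
        rcases hd with rfl | hd
        · exact hdL
        · exact hsub.subset (hpd' d hd)

open Classical in
/-- Net flow across a vertex set counts crossing darts. -/
lemma sum_netL (S : Finset V) (L : List (E × V × V)) :
    (∑ w ∈ S, netL L w) =
      (L.map fun d => if d.2.1 ∈ S ∧ d.2.2 ∉ S then (1 : ℤ) else 0).sum
        - (L.map fun d => if d.2.1 ∉ S ∧ d.2.2 ∈ S then (1 : ℤ) else 0).sum := by
  induction L with
  | nil => simp [netL]
  | cons d L ih =>
    have hsum : (∑ w ∈ S, netL (d :: L) w) = (∑ w ∈ S, dnet w d) + ∑ w ∈ S, netL L w := by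
      simp [netL_cons, Finset.sum_add_distrib]
    have hdn : (∑ w ∈ S, dnet w d) =
        (if d.2.1 ∈ S then (1 : ℤ) else 0) - (if d.2.2 ∈ S then (1 : ℤ) else 0) := by
      simp [dnet, Finset.sum_sub_distrib, Finset.sum_ite_eq']
    rw [hsum, hdn, ih]
    simp only [List.map_cons, List.sum_cons]
    by_cases h1 : d.2.1 ∈ S <;> by_cases h2 : d.2.2 ∈ S <;> simp [h1, h2] <;> ring

end MengerAux

section RWalkDef

variable {V E : Type} (G : Multigraph V E)

open Multigraph

/-- Residual walks relative to a dart list `L`: unused edges may be traversed in any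
direction, used darts only backwards. -/
inductive RWalk (L : List (E × V × V)) : V → V → Type where
  | nil (x : V) : RWalk L x x
  | consF {x y z : V} (e : E) (he : G.inc e = s(x, y)) (hu : e ∉ L.map Prod.fst)
      (t : RWalk L y z) : RWalk L x z
  | consB {x y z : V} (e : E) (hd : (e, y, x) ∈ L) (t : RWalk L y z) : RWalk L x z

end RWalkDef

namespace RWalk

open Multigraph

variable {V E : Type} {G : Multigraph V E} {L : List (E × V × V)}

def support : ∀ {x z : V}, RWalk G L x z → List V
  | x, _, .nil _ => [x]
  | x, _, .consF _ _ _ t => x :: t.support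
  | x, _, .consB _ _ t => x :: t.support

def edges : ∀ {x z : V}, RWalk G L x z → List E
  | _, _, .nil _ => []
  | _, _, .consF e _ _ t => e :: t.edges
  | _, _, .consB e _ t => e :: t.edges

def fwd : ∀ {x z : V}, RWalk G L x z → List (E × V × V)
  | _, _, .nil _ => []
  | _, _, @RWalk.consF _ _ _ _ x y _ e _ _ t => (e, x, y) :: t.fwd
  | _, _, .consB _ _ t => t.fwd

def bwd : ∀ {x z : V}, RWalk G L x z → List (E × V × V)
  | _, _, .nil _ => []
  | _, _, .consF _ _ _ t => t.bwd
  | _, _, @RWalk.consB _ _ _ _ x y _ e _ t => (e, y, x) :: t.bwd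

lemma start_mem_support : ∀ {x z : V} (R : RWalk G L x z), x ∈ R.support
  | _, _, .nil _ => by simp [support]
  | _, _, .consF _ _ _ _ => by simp [support]
  | _, _, .consB _ _ _ => by simp [support]

lemma mem_fwd : ∀ {x z : V} (R : RWalk G L x z), ∀ d ∈ R.fwd,
    G.inc d.1 = s(d.2.1, d.2.2) ∧ d.1 ∉ L.map Prod.fst
  | _, _, .nil _ => by simp [fwd]
  | _, _, .consF e he hu t => by
    intro d hd
    simp only [fwd, List.mem_cons] at hd
    rcases hd with rfl | hd
    · exact ⟨he, hu⟩
    · exact mem_fwd t d hd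
  | _, _, .consB e hd' t => fun d hd => mem_fwd t d hd

lemma mem_bwd : ∀ {x z : V} (R : RWalk G L x z), ∀ d ∈ R.bwd, d ∈ L
  | _, _, .nil _ => by simp [bwd]
  | _, _, .consF e he hu t => fun d hd => mem_bwd t d hd
  | _, _, .consB e hd' t => by
    intro d hd
    simp only [bwd, List.mem_cons] at hd
    rcases hd with rfl | hd
    · exact hd'
    · exact mem_bwd t d hd

lemma edges_perm : ∀ {x z : V} (R : RWalk G L x z),
    R.edges.Perm (R.fwd.map Prod.fst ++ R.bwd.map Prod.fst)
  | _, _, .nil _ => by simp [edges, fwd, bwd]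
  | _, _, .consF e he hu t => by
    simpa [edges, fwd, bwd] using (edges_perm t).cons e
  | _, _, .consB e hd t => by
    simp only [edges, fwd, bwd, List.map_cons]
    exact ((edges_perm t).cons e).trans List.perm_middle.symm

lemma net_fwd_bwd : ∀ {x z : V} (R : RWalk G L x z) (w : V),
    netL R.fwd w - netL R.bwd w = (if w = x then 1 else 0) - (if w = z then 1 else 0)
  | _, _, .nil _, w => by simp [fwd, bwd]
  | _, _, @RWalk.consF _ _ _ _ x y _ e he hu t, w => by
    have ih := net_fwd_bwd t w
    simp only [fwd, bwd, netL_cons]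
    have hd : dnet w (e, x, y) = (if w = x then 1 else 0) - (if w = y then 1 else 0) := rfl
    omega
  | _, _, @RWalk.consB _ _ _ _ x y _ e hd t, w => by
    have ih := net_fwd_bwd t w
    simp only [fwd, bwd, netL_cons]
    have hd2 : dnet w (e, y, x) = (if w = y then 1 else 0) - (if w = x then 1 else 0) := rfl
    omega

lemma endpoints (hval : ValidD G L) : ∀ {x z : V} (R : RWalk G L x z), ∀ e ∈ R.edges,
    ∃ a b, G.inc e = s(a, b) ∧ a ∈ R.support ∧ b ∈ R.support
  | _, _, .nil _ => by simp [edges]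
  | _, _, @RWalk.consF _ _ _ _ x y _ e' he hu t => by
    intro e he'
    simp only [edges, List.mem_cons] at he'
    rcases he' with rfl | he'
    · exact ⟨x, y, he, by simp [support], by simp [support, start_mem_support t]⟩
    · obtain ⟨a, b, h1, h2, h3⟩ := endpoints hval t e he'
      exact ⟨a, b, h1, by simp [support, h2], by simp [support, h3]⟩
  | _, _, @RWalk.consB _ _ _ _ x y _ e' hd t => by
    intro e he'
    simp only [edges, List.mem_cons] at he'
    rcases he' with rfl | he'
    · exact ⟨y, x, hval _ hd, by simp [support, start_mem_support t], by simp [support]⟩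
    · obtain ⟨a, b, h1, h2, h3⟩ := endpoints hval t e he'
      exact ⟨a, b, h1, by simp [support, h2], by simp [support, h3]⟩

lemma takeUntil : ∀ {x z : V} (R : RWalk G L x z), ∀ y ∈ R.support,
    ∃ R' : RWalk G L x y, R'.edges.Sublist R.edges
  | _, _, .nil x => by
    intro y hy
    simp only [support, List.mem_singleton] at hy
    subst hy
    exact ⟨.nil y, by simp [edges]⟩
  | _, _, @RWalk.consF _ _ _ _ x m _ e he hu t => by
    intro y hy
    simp only [support, List.mem_cons] at hy
    by_cases hyt : y ∈ t.support
    · obtain ⟨t', ht'⟩ := takeUntil t y hyt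
      exact ⟨.consF e he hu t', by simpa [edges] using ht'.cons₂ e⟩
    · have hyx : y = x := by tauto
      subst hyx
      exact ⟨.nil y, by simp [edges]⟩
  | _, _, @RWalk.consB _ _ _ _ x m _ e hd t => by
    intro y hy
    simp only [support, List.mem_cons] at hy
    by_cases hyt : y ∈ t.support
    · obtain ⟨t', ht'⟩ := takeUntil t y hyt
      exact ⟨.consB e hd t', by simpa [edges] using ht'.cons₂ e⟩
    · have hyx : y = x := by tauto
      subst hyx
      exact ⟨.nil y, by simp [edges]⟩

lemma append : ∀ {x y z : V} (R : RWalk G L x y) (S : RWalk G L y z),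
    ∃ T : RWalk G L x z, T.edges = R.edges ++ S.edges
  | _, _, _, .nil _, S => ⟨S, by simp [edges]⟩
  | _, _, _, .consF e he hu t, S => by
    obtain ⟨T, hT⟩ := append t S
    exact ⟨.consF e he hu T, by simp [edges, hT]⟩
  | _, _, _, .consB e hd t, S => by
    obtain ⟨T, hT⟩ := append t S
    exact ⟨.consB e hd T, by simp [edges, hT]⟩

end RWalk

section MengerMain

open Multigraph

variable {V E : Type} {G : Multigraph V E}

lemma three_le_ncard {α : Type} {S : Set α} (hfin : S.Finite) {x y z : α}
    (hx : x ∈ S) (hy : y ∈ S) (hz : z ∈ S) (hxy : x ≠ y) (hxz : x ≠ z) (hyz : y ≠ z) :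
    3 ≤ S.ncard := by
  have hsub : {x, y, z} ⊆ S := by
    intro a ha
    simp only [Set.mem_insert_iff, Set.mem_singleton_iff] at ha
    rcases ha with rfl | rfl | rfl <;> assumption
  have h3 : ({x, y, z} : Set α).ncard = 3 := by
    rw [Set.ncard_insert_of_notMem (by simp [hxy, hxz]),
      Set.ncard_insert_of_notMem (by simp [hyz]), Set.ncard_singleton]
  calc 3 = ({x, y, z} : Set α).ncard := h3.symm
    _ ≤ S.ncard := Set.ncard_le_ncard hsub hfin

lemma sym2_exists_rep (w : Sym2 V) : ∃ x y : V, w = s(x, y) := by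
  induction w using Sym2.ind with
  | _ x y => exact ⟨x, y, rfl⟩

/-- The augmenting step. -/
lemma augment [Finite V] {u v : V} (huv : u ≠ v) (k : ℕ)
    (hcut : ∀ A : Set V, u ∈ A → v ∉ A → 3 ≤ (G.delta A).ncard) (hk : k ≤ 2)
    (L : List (E × V × V)) (hval : ValidD G L) (hnd : (L.map Prod.fst).Nodup)
    (hbal : ∀ w, netL L w = if w = u then (k : ℤ) else if w = v then -(k : ℤ) else 0) :
    ∃ L' : List (E × V × V), ValidD G L' ∧ (L'.map Prod.fst).Nodup ∧
      ∀ w, netL L' w = if w = u then (k : ℤ) + 1 else if w = v then -((k : ℤ) + 1) else 0 := by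
  classical
  set A : Set V := {x | ∃ R : RWalk G L u x, R.edges.Nodup} with hAdef
  have huA : u ∈ A := ⟨RWalk.nil u, by simp [RWalk.edges]⟩
  have hstep : ∀ x y e, x ∈ A →
      ((e ∉ L.map Prod.fst ∧ G.inc e = s(x, y)) ∨ (e, y, x) ∈ L) → y ∈ A := by
    rintro x y e ⟨R, hRnd⟩ hcase
    by_cases heR : e ∈ R.edges
    · obtain ⟨a, b, hab, haS, hbS⟩ := RWalk.endpoints hval R e heR
      have hinc : G.inc e = s(x, y) := by
        rcases hcase with ⟨_, h⟩ | h
        · exact h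
        · have h2 := hval _ h
          rw [h2, Sym2.eq_swap]
      have hy : y ∈ R.support := by
        have hss : s(a, b) = s(x, y) := by rw [← hab, hinc]
        rcases Sym2.eq_iff.1 hss with ⟨_, rfl⟩ | ⟨rfl, _⟩
        · exact hbS
        · exact haS
      obtain ⟨R', hR'⟩ := RWalk.takeUntil R y hy
      exact ⟨R', List.Nodup.sublist hR' hRnd⟩
    · have hsingle : ∃ S : RWalk G L x y, S.edges = [e] := by
        rcases hcase with ⟨hu', hinc⟩ | h
        · exact ⟨RWalk.consF e hinc hu' (RWalk.nil y), rfl⟩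
        · exact ⟨RWalk.consB e h (RWalk.nil y), rfl⟩
      obtain ⟨S, hS⟩ := hsingle
      obtain ⟨T, hT⟩ := RWalk.append R S
      refine ⟨T, ?_⟩
      rw [hT, hS]
      simp [List.nodup_append, hRnd, List.disjoint_singleton, heR]
      intro a ha h; exact heR (h ▸ ha)
  by_cases hvA : v ∈ A
  · obtain ⟨R, hRnd⟩ := hvA
    have hperm := RWalk.edges_perm R
    have hfb : ((R.fwd.map Prod.fst) ++ (R.bwd.map Prod.fst)).Nodup := hperm.nodup_iff.1 hRnd
    rw [List.nodup_append] at hfb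
    obtain ⟨hfnd, hbnd, hdisj⟩ := hfb
    have hbsub : ∀ d ∈ R.bwd, d ∈ L := RWalk.mem_bwd R
    have hbperm : (L.filter fun d => decide (d.1 ∈ R.bwd.map Prod.fst)).Perm R.bwd :=
      filter_perm_of_sub hnd hbsub hbnd
    refine ⟨(L.filter fun d => !decide (d.1 ∈ R.bwd.map Prod.fst)) ++ R.fwd, ?_, ?_, ?_⟩
    · intro d hd
      rcases List.mem_append.1 hd with hd | hd
      · exact hval d (List.mem_of_mem_filter hd)
      · exact (RWalk.mem_fwd R d hd).1
    · rw [List.map_append, List.nodup_append]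
      refine ⟨List.Nodup.sublist ((List.filter_sublist (l := L)).map Prod.fst) hnd, hfnd, ?_⟩
      intro a ha b ha' hab
      subst hab
      obtain ⟨d, hd, rfl⟩ := List.mem_map.1 ha
      obtain ⟨d', hd', hfst⟩ := List.mem_map.1 ha'
      have h1 : d.1 ∈ L.map Prod.fst := List.mem_map_of_mem (f := Prod.fst) (List.mem_of_mem_filter hd)
      have h2 := (RWalk.mem_fwd R d' hd').2
      rw [hfst] at h2
      exact h2 h1
    · intro w
      have hnet : netL ((L.filter fun d => !decide (d.1 ∈ R.bwd.map Prod.fst)) ++ R.fwd) w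
          = netL L w - netL R.bwd w + netL R.fwd w := by
        rw [netL_append]
        have hsplit := netL_perm
          (List.filter_append_perm (fun d => decide (d.1 ∈ R.bwd.map Prod.fst)) L) w
        rw [netL_append] at hsplit
        have h1 : netL (L.filter fun d => decide (d.1 ∈ R.bwd.map Prod.fst)) w
            = netL R.bwd w := netL_perm hbperm w
        omega
      have hRnet := RWalk.net_fwd_bwd R w
      have hb := hbal w
      rw [hnet]
      by_cases h1 : w = u
      · subst h1
        rw [if_pos rfl] at hb ⊢
        rw [if_pos rfl, if_neg huv] at hRnet
        omega
      · rw [if_neg h1] at hb ⊢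
        rw [if_neg h1] at hRnet
        by_cases h2 : w = v
        · subst h2
          rw [if_pos rfl] at hb hRnet ⊢
          omega
        · rw [if_neg h2] at hb hRnet ⊢
          omega
  · exfalso
    have h3 := hcut A huA hvA
    have hLnd : L.Nodup := List.Nodup.of_map Prod.fst hnd
    have hsub : G.delta A ⊆
        ↑((L.toFinset.filter fun d => d.2.1 ∈ A ∧ d.2.2 ∉ A).image Prod.fst) := by
      intro e he
      obtain ⟨x, y, hxy, hxA, hyA⟩ := he
      by_cases hmem : e ∈ L.map Prod.fst
      · obtain ⟨d, hd, hde⟩ := List.mem_map.1 hmem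
        obtain ⟨e', a, b⟩ := d
        have hee : e = e' := hde.symm
        subst hee
        have hincd : G.inc e = s(a, b) := hval _ hd
        have hss : s(a, b) = s(x, y) := by rw [← hincd, hxy]
        rcases Sym2.eq_iff.1 hss with ⟨h1, h2⟩ | ⟨h1, h2⟩
        · subst h1; subst h2
          simp only [Finset.coe_image, Set.mem_image, Finset.mem_coe, Finset.mem_filter]
          exact ⟨(e, a, b), ⟨List.mem_toFinset.2 hd, hxA, hyA⟩, rfl⟩
        · subst h1; subst h2
          exact absurd (hstep b a e hxA (Or.inr hd)) hyA
      · exact absurd (hstep x y e hxA (Or.inl ⟨hmem, hxy⟩)) hyA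
    have hAfin : A.Finite := Set.toFinite A
    have hsum := sum_netL hAfin.toFinset L
    have hL1 : (∑ w ∈ hAfin.toFinset, netL L w) = (k : ℤ) := by
      have hcongr : ∀ w ∈ hAfin.toFinset, netL L w = (if w = u then (k : ℤ) else 0) := by
        intro w hw
        have hwv : w ≠ v := fun h => hvA (h ▸ (hAfin.mem_toFinset.1 hw))
        rw [hbal w]
        by_cases h1 : w = u
        · simp [h1]
        · simp [h1, hwv]
      rw [Finset.sum_congr rfl hcongr, Finset.sum_ite_eq' hAfin.toFinset u fun _ => (k : ℤ)]
      rw [if_pos (hAfin.mem_toFinset.2 huA)]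
    have hcin : (L.map fun d => if d.2.1 ∉ hAfin.toFinset ∧ d.2.2 ∈ hAfin.toFinset
        then (1 : ℤ) else 0).sum = 0 := by
      apply List.sum_eq_zero
      intro z hz
      obtain ⟨d, hd, rfl⟩ := List.mem_map.1 hz
      obtain ⟨e', a, b⟩ := d
      have hno : ¬ ((e', a, b).2.1 ∉ hAfin.toFinset ∧ (e', a, b).2.2 ∈ hAfin.toFinset) := by
        rintro ⟨hh1, hh2⟩
        simp only [hAfin.mem_toFinset] at hh1 hh2
        exact hh1 (hstep b a e' hh2 (Or.inr hd))
      rw [if_neg hno]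
    rw [hL1, hcin, sub_zero] at hsum
    have hcout : (L.map fun d => if d.2.1 ∈ hAfin.toFinset ∧ d.2.2 ∉ hAfin.toFinset
        then (1 : ℤ) else 0).sum
        = (L.map fun d => if d.2.1 ∈ A ∧ d.2.2 ∉ A then (1 : ℤ) else 0).sum := by
      simp only [hAfin.mem_toFinset]
    rw [hcout] at hsum
    have hcard : (((L.toFinset.filter fun d => d.2.1 ∈ A ∧ d.2.2 ∉ A).card : ℤ))
        = (L.map fun d => if d.2.1 ∈ A ∧ d.2.2 ∉ A then (1 : ℤ) else 0).sum := by
      rw [← List.sum_toFinset _ hLnd, Finset.sum_boole]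
    have h4 : (G.delta A).ncard
        ≤ ((L.toFinset.filter fun d => d.2.1 ∈ A ∧ d.2.2 ∉ A).image Prod.fst).card := by
      have h := Set.ncard_le_ncard hsub (Finset.finite_toSet _)
      rwa [Set.ncard_coe_finset] at h
    have h5 := Finset.card_image_le (s := L.toFinset.filter fun d => d.2.1 ∈ A ∧ d.2.2 ∉ A)
      (f := Prod.fst)
    omega

/-- Edge-Menger for three paths: if no cut of size `< 3` separates `u` and `v`,
there are three pairwise edge-disjoint paths. -/
lemma menger_three [Finite V] {u v : V} (huv : u ≠ v)
    (hcut : ∀ A : Set V, u ∈ A → v ∉ A → 3 ≤ (G.delta A).ncard) :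
    ThreePaths G u v := by
  classical
  have key : ∀ k : ℕ, k ≤ 3 → ∃ L : List (E × V × V), ValidD G L ∧
      (L.map Prod.fst).Nodup ∧
      ∀ w, netL L w = if w = u then (k : ℤ) else if w = v then -(k : ℤ) else 0 := by
    intro k
    induction k with
    | zero =>
      intro _
      refine ⟨[], fun d hd => absurd hd List.not_mem_nil, by simp, fun w => ?_⟩
      simp only [netL_nil, Nat.cast_zero, neg_zero]
      split <;> try rfl
      split <;> rfl
    | succ k ih =>
      intro hk
      obtain ⟨L, h1, h2, h3⟩ := ih (by omega)
      obtain ⟨L', h1', h2', h3'⟩ := augment huv k hcut (by omega) L h1 h2 h3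
      refine ⟨L', h1', h2', fun w => ?_⟩
      rw [h3' w]
      push_cast
      ring_nf
  have remove : ∀ (L : List (E × V × V)) (k : ℤ), ValidD G L → (L.map Prod.fst).Nodup →
      (∀ w, netL L w = if w = u then k else if w = v then -k else 0) → 1 ≤ k →
      ∃ (p : G.Walk u v) (L' : List (E × V × V)), p.edges.Nodup ∧
        (∀ e ∈ p.edges, e ∈ L.map Prod.fst) ∧
        ValidD G L' ∧ (L'.map Prod.fst).Nodup ∧
        (∀ e ∈ L'.map Prod.fst, e ∈ L.map Prod.fst ∧ e ∉ p.edges) ∧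
        (∀ w, netL L' w = if w = u then k - 1 else if w = v then -(k - 1) else 0) := by
    intro L k hval hnd hbal hk
    obtain ⟨p, hpe, hpd⟩ := exists_trail (G := G) (v := v) L.length L le_rfl hval hnd u huv
      (fun w hw => by rw [hbal w]; split <;> omega)
      (by rw [hbal u, if_pos rfl]; omega)
    have hpmap : ∀ e ∈ p.edges, e ∈ L.map Prod.fst := by
      intro e he
      rw [Multigraph.Walk.edges_eq_dart_map] at he
      obtain ⟨d, hd, rfl⟩ := List.mem_map.1 he
      exact List.mem_map_of_mem (f := Prod.fst) (hpd d hd)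
    have hdnd : (p.dartList.map Prod.fst).Nodup := by
      rw [← Multigraph.Walk.edges_eq_dart_map]; exact hpe
    have hdperm : (L.filter fun d => decide (d.1 ∈ p.dartList.map Prod.fst)).Perm p.dartList :=
      filter_perm_of_sub hnd hpd hdnd
    refine ⟨p, L.filter fun d => !decide (d.1 ∈ p.dartList.map Prod.fst), hpe, hpmap,
      ?_, ?_, ?_, ?_⟩
    · exact fun d hd => hval d (List.mem_of_mem_filter hd)
    · exact List.Nodup.sublist ((List.filter_sublist (l := L)).map Prod.fst) hnd
    · intro e he
      obtain ⟨d, hd, rfl⟩ := List.mem_map.1 he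
      have h1 := List.mem_filter.1 hd
      refine ⟨List.mem_map_of_mem (f := Prod.fst) h1.1, ?_⟩
      have h2 := h1.2
      simp only [Bool.not_eq_true', decide_eq_false_iff_not] at h2
      rw [Multigraph.Walk.edges_eq_dart_map]
      exact h2
    · intro w
      have hsplit := netL_perm
        (List.filter_append_perm (fun d => decide (d.1 ∈ p.dartList.map Prod.fst)) L) w
      rw [netL_append] at hsplit
      have h1 : netL (L.filter fun d => decide (d.1 ∈ p.dartList.map Prod.fst)) w
          = netL p.dartList w := netL_perm hdperm w
      have h2 := netL_dartList p w
      have hb := hbal w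
      by_cases hw1 : w = u
      · subst hw1
        rw [if_pos rfl] at hb ⊢
        rw [if_pos rfl, if_neg huv] at h2
        omega
      · rw [if_neg hw1] at hb ⊢
        rw [if_neg hw1] at h2
        by_cases hw2 : w = v
        · subst hw2
          rw [if_pos rfl] at hb h2 ⊢
          omega
        · rw [if_neg hw2] at hb h2 ⊢
          omega
  obtain ⟨L, hval, hnd, hbal⟩ := key 3 le_rfl
  have hbal3 : ∀ w, netL L w = if w = u then (3 : ℤ) else if w = v then -(3 : ℤ) else 0 := by
    intro w; rw [hbal w]; norm_num
  obtain ⟨p₁, L₁, hp₁nd, hp₁sub, hv₁, hn₁, hmem₁, hb₁⟩ := remove L 3 hval hnd hbal3 (by norm_num)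
  have hb₁' : ∀ w, netL L₁ w = if w = u then (2 : ℤ) else if w = v then -(2 : ℤ) else 0 := by
    intro w; rw [hb₁ w]; norm_num
  obtain ⟨p₂, L₂, hp₂nd, hp₂sub, hv₂, hn₂, hmem₂, hb₂⟩ := remove L₁ 2 hv₁ hn₁ hb₁' (by norm_num)
  have hb₂' : ∀ w, netL L₂ w = if w = u then (1 : ℤ) else if w = v then -(1 : ℤ) else 0 := by
    intro w; rw [hb₂ w]; norm_num
  obtain ⟨p₃, L₃, hp₃nd, hp₃sub, hv₃, hn₃, hmem₃, hb₃⟩ := remove L₂ 1 hv₂ hn₂ hb₂' (by norm_num)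
  have hd₁₂ : ∀ e ∈ p₂.edges, e ∉ p₁.edges := fun e he => (hmem₁ e (hp₂sub e he)).2
  have hd₂₃ : ∀ e ∈ p₃.edges, e ∉ p₂.edges := fun e he => (hmem₂ e (hp₃sub e he)).2
  have hd₁₃ : ∀ e ∈ p₃.edges, e ∉ p₁.edges := fun e he =>
    (hmem₁ e (hmem₂ e (hp₃sub e he)).1).2
  obtain ⟨q₁, hq₁, hq₁e⟩ := Multigraph.Walk.exists_bypass p₁
  obtain ⟨q₂, hq₂, hq₂e⟩ := Multigraph.Walk.exists_bypass p₂
  obtain ⟨q₃, hq₃, hq₃e⟩ := Multigraph.Walk.exists_bypass p₃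
  exact ⟨q₁, q₂, q₃, hq₁, hq₂, hq₃,
    fun e he₁ he₂ => hd₁₂ e (hq₂e he₂) (hq₁e he₁),
    fun e he₁ he₂ => hd₁₃ e (hq₃e he₂) (hq₁e he₁),
    fun e he₁ he₂ => hd₂₃ e (hq₃e he₂) (hq₂e he₁)⟩

/-- A vertex set with a small cut cannot separate 3-edge-connected vertices. -/
lemma saturated [Finite E] {A : Set V} (h2 : (G.delta A).ncard ≤ 2) :
    ∀ x y, Relation.EqvGen (ThreeEC G) x y → (x ∈ A ↔ y ∈ A) := by
  intro x y h
  induction h with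
  | rel a b hab =>
    rcases hab with rfl | ⟨p₁, p₂, p₃, _, _, _, h12, h13, h23⟩
    · exact Iff.rfl
    · constructor
      · intro haA
        by_contra hbA
        obtain ⟨e₁, he₁, hd₁⟩ := Multigraph.Walk.exists_cross p₁ haA hbA
        obtain ⟨e₂, he₂, hd₂⟩ := Multigraph.Walk.exists_cross p₂ haA hbA
        obtain ⟨e₃, he₃, hd₃⟩ := Multigraph.Walk.exists_cross p₃ haA hbA
        have h3 := three_le_ncard (Set.toFinite _) hd₁ hd₂ hd₃
          (fun h => h12 e₁ he₁ (h ▸ he₂)) (fun h => h13 e₁ he₁ (h ▸ he₃))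
          (fun h => h23 e₂ he₂ (h ▸ he₃))
        omega
      · intro hbA
        by_contra haA
        obtain ⟨e₁, he₁, hd₁⟩ := Multigraph.Walk.exists_cross' p₁ haA hbA
        obtain ⟨e₂, he₂, hd₂⟩ := Multigraph.Walk.exists_cross' p₂ haA hbA
        obtain ⟨e₃, he₃, hd₃⟩ := Multigraph.Walk.exists_cross' p₃ haA hbA
        have h3 := three_le_ncard (Set.toFinite _) hd₁ hd₂ hd₃
          (fun h => h12 e₁ he₁ (h ▸ he₂)) (fun h => h13 e₁ he₁ (h ▸ he₃))
          (fun h => h23 e₂ he₂ (h ▸ he₃))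
        omega
  | refl a => exact Iff.rfl
  | symm a b _ ih => exact ih.symm
  | trans a b c _ _ ih1 ih2 => exact ih1.trans ih2

end MengerMain

/-- in the quotient of G by 3-edge-connectedness, no two distinct
vertices are 3-edge-connected. -/
theorem quot_tcc_not_threeEC {V E : Type} [Finite V] [Finite E]
    (G : Multigraph V E) (hG : G.Loopless) :
    ∀ X Y : Quotient (tccSetoid G), X ≠ Y →
      ¬ ThreeEC (G.quot (tccSetoid G)) X Y := by
  classical
  intro X Y hXY hTEC
  rcases hTEC with h | h
  · exact hXY h
  obtain ⟨P₁, P₂, P₃, _, _, _, h12, h13, h23⟩ := h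
  have huv : X.out ≠ Y.out := by
    intro h
    apply hXY
    rw [← Quotient.out_eq X, ← Quotient.out_eq Y, h]
  have hcut : ∀ A : Set V, X.out ∈ A → Y.out ∉ A → 3 ≤ (G.delta A).ncard := by
    intro A huA hvA
    by_contra hlt
    push_neg at hlt
    have h2 : (G.delta A).ncard ≤ 2 := by omega
    have hsat := saturated (G := G) h2
    have hmk : ∀ x : V, (Quotient.mk (tccSetoid G) x).out ∈ A ↔ x ∈ A := by
      intro x
      exact hsat _ _ (@Quotient.mk_out V (tccSetoid G) x)
    set Ab : Set (Quotient (tccSetoid G)) := {Z | Z.out ∈ A} with hAb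
    have hXAb : X ∈ Ab := huA
    have hYAb : Y ∉ Ab := hvA
    have conv : ∀ f0 : {e : E // ¬ (Sym2.map (Quotient.mk (tccSetoid G)) (G.inc e)).IsDiag},
        f0 ∈ (G.quot (tccSetoid G)).delta Ab → f0.1 ∈ G.delta A := by
      rintro ⟨e, hne⟩ ⟨XZ, YZ, hq, hXZ, hYZ⟩
      obtain ⟨x, y, hxy⟩ := sym2_exists_rep (G.inc e)
      have hq' : s(Quotient.mk (tccSetoid G) x, Quotient.mk (tccSetoid G) y) = s(XZ, YZ) := by
        rw [← hq]
        show _ = Sym2.map _ (G.inc e)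
        rw [hxy, Sym2.map_pair_eq]
      rcases Sym2.eq_iff.1 hq' with ⟨h1, h2⟩ | ⟨h1, h2⟩
      · refine ⟨x, y, hxy, ?_, ?_⟩
        · exact (hmk x).1 (by rw [h1]; exact hXZ)
        · intro hyA
          exact hYZ (by rw [← h2]; exact (hmk y).2 hyA)
      · refine ⟨y, x, by rw [hxy, Sym2.eq_swap], ?_, ?_⟩
        · exact (hmk y).1 (by rw [h2]; exact hXZ)
        · intro hxA
          exact hYZ (by rw [← h1]; exact (hmk x).2 hxA)
    obtain ⟨f1, hm₁, hd₁⟩ := Multigraph.Walk.exists_cross P₁ hXAb hYAb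
    obtain ⟨f2, hm₂, hd₂⟩ := Multigraph.Walk.exists_cross P₂ hXAb hYAb
    obtain ⟨f3, hm₃, hd₃⟩ := Multigraph.Walk.exists_cross P₃ hXAb hYAb
    have h3 := three_le_ncard (Set.toFinite _) (conv f1 hd₁) (conv f2 hd₂) (conv f3 hd₃)
      (fun h => h12 f1 hm₁ (by rw [Subtype.ext h]; exact hm₂))
      (fun h => h13 f1 hm₁ (by rw [Subtype.ext h]; exact hm₃))
      (fun h => h23 f2 hm₂ (by rw [Subtype.ext h]; exact hm₃))
    omega
  have hTP : ThreePaths G X.out Y.out := menger_three huv hcut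
  apply hXY
  rw [← Quotient.out_eq X, ← Quotient.out_eq Y]
  exact Quotient.sound (Relation.EqvGen.rel _ _ (Or.inr hTP))

end TCW
end

section
/- For any finite multigraph G, the quotient graph G/∼₃CC of G by the 3-edge-connectedness relation is a cactus. -/
namespace TCW

open Multigraph

section Aux
open List

variable {V E : Type}

lemma sym2_exists_pair (z : Sym2 V) : ∃ p : V × V, z = s(p.1, p.2) :=
  Sym2.ind (fun x y => ⟨(x, y), rfl⟩) z

noncomputable def epr (G : Multigraph V E) (e : E) : V × V :=
  (sym2_exists_pair (G.inc e)).choose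

lemma inc_epr (G : Multigraph V E) (e : E) :
    G.inc e = s((epr G e).1, (epr G e).2) := (sym2_exists_pair (G.inc e)).choose_spec

noncomputable def dsrc (G : Multigraph V E) (e : E) (b : Bool) : V :=
  if b then (epr G e).1 else (epr G e).2

noncomputable def ddst (G : Multigraph V E) (e : E) (b : Bool) : V :=
  if b then (epr G e).2 else (epr G e).1

lemma inc_dart (G : Multigraph V E) (e : E) (b : Bool) :
    G.inc e = s(dsrc G e b, ddst G e b) := by
  cases b <;> simp only [dsrc, ddst, if_true, if_false, Bool.false_eq_true] <;>
    rw [inc_epr G e]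
  · exact Sym2.eq_swap

inductive RWalk_s7 (G : Multigraph V E) (A : E → Bool → Prop) : V → V → Type where
  | nil (v : V) : RWalk_s7 G A v v
  | cons {w : V} (e : E) (b : Bool) (hA : A e b) (tail : RWalk_s7 G A (ddst G e b) w) :
      RWalk_s7 G A (dsrc G e b) w

namespace RWalk_s7

variable {G : Multigraph V E} {A B : E → Bool → Prop}

noncomputable def darts : ∀ {u v}, RWalk_s7 G A u v → List (E × Bool)
  | _, _, .nil _ => []
  | _, _, .cons e b _ t => (e, b) :: t.darts

noncomputable def edgesR {u v} (p : RWalk_s7 G A u v) : List E := p.darts.map Prod.fst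

noncomputable def supp : ∀ {u v}, RWalk_s7 G A u v → List V
  | u, _, .nil _ => [u]
  | _, _, .cons e b _ t => dsrc G e b :: t.supp


lemma supp_eq_cons : ∀ {u v} (p : RWalk_s7 G A u v), ∃ t, p.supp = u :: t
  | _, _, .nil _ => ⟨[], by simp [supp]⟩
  | _, _, .cons e b h t => ⟨t.supp, by simp [supp]⟩

lemma supp_ne_nil {u v} (p : RWalk_s7 G A u v) : p.supp ≠ [] := by
  obtain ⟨t, ht⟩ := supp_eq_cons p; simp [ht]

lemma start_mem_supp {u v} (p : RWalk_s7 G A u v) : u ∈ p.supp := by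
  obtain ⟨t, ht⟩ := supp_eq_cons p; simp [ht]

lemma supp_concat : ∀ {u v} (p : RWalk_s7 G A u v), ∃ l, p.supp = l ++ [v]
  | _, _, .nil v => ⟨[], by simp [supp]⟩
  | _, _, .cons e b h t => by
      obtain ⟨l, hl⟩ := supp_concat t
      exact ⟨dsrc G e b :: l, by simp [supp, hl]⟩

lemma end_mem_supp {u v} (p : RWalk_s7 G A u v) : v ∈ p.supp := by
  obtain ⟨l, hl⟩ := supp_concat p; simp [hl]

lemma length_supp : ∀ {u v} (p : RWalk_s7 G A u v), p.supp.length = p.darts.length + 1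
  | _, _, .nil _ => by simp [supp, darts]
  | _, _, .cons e b h t => by simp [supp, darts, length_supp t]

lemma darts_prop : ∀ {u v} (p : RWalk_s7 G A u v), ∀ d ∈ p.darts, A d.1 d.2
  | _, _, .nil _ => by simp [darts]
  | _, _, .cons e b h t => by
      simp only [darts, List.mem_cons]
      rintro d (h1 | h2)
      · subst h1; exact h
      · exact darts_prop t d h2

lemma dart_mem_supp : ∀ {u v} (p : RWalk_s7 G A u v), ∀ d ∈ p.darts,
    dsrc G d.1 d.2 ∈ p.supp ∧ ddst G d.1 d.2 ∈ p.supp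
  | _, _, .nil _ => by simp [darts]
  | _, _, .cons e b h t => by
      simp only [darts, List.mem_cons, supp]
      rintro d (h1 | h2)
      · subst h1
        exact ⟨Or.inl rfl, Or.inr (start_mem_supp t)⟩
      · have := dart_mem_supp t d h2
        exact ⟨Or.inr this.1, Or.inr this.2⟩

def copyR {u v u' v'} (p : RWalk_s7 G A u v) (hu : u = u') (hv : v = v') : RWalk_s7 G A u' v' :=
  hu ▸ hv ▸ p

@[simp] lemma darts_copyR {u v u' v'} (p : RWalk_s7 G A u v) (hu : u = u') (hv : v = v') :
    (p.copyR hu hv).darts = p.darts := by subst hu; subst hv; rfl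

@[simp] lemma supp_copyR {u v u' v'} (p : RWalk_s7 G A u v) (hu : u = u') (hv : v = v') :
    (p.copyR hu hv).supp = p.supp := by subst hu; subst hv; rfl

noncomputable def appendR : ∀ {u v w}, RWalk_s7 G A u v → RWalk_s7 G A v w → RWalk_s7 G A u w
  | _, _, _, .nil _, q => q
  | _, _, _, .cons e b h t, q => .cons e b h (appendR t q)

lemma darts_appendR : ∀ {u v w} (p : RWalk_s7 G A u v) (q : RWalk_s7 G A v w),
    (appendR p q).darts = p.darts ++ q.darts
  | _, _, _, .nil _, q => by simp [appendR, darts]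
  | _, _, _, .cons e b h t, q => by simp [appendR, darts, darts_appendR t q]

lemma supp_appendR : ∀ {u v w} (p : RWalk_s7 G A u v) (q : RWalk_s7 G A v w),
    (appendR p q).supp = p.supp ++ q.supp.tail
  | _, _, _, .nil v, q => by
      obtain ⟨t, ht⟩ := supp_eq_cons q
      simp [appendR, supp, ht]
  | _, _, _, .cons e b h t, q => by simp [appendR, supp, supp_appendR t q]

lemma exists_relax : ∀ {u v} (p : RWalk_s7 G A u v), (∀ e b, A e b → B e b) →
    ∃ q : RWalk_s7 G B u v, q.darts = p.darts ∧ q.supp = p.supp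
  | _, _, .nil v, _ => ⟨.nil v, rfl, rfl⟩
  | _, _, .cons e b hA t, h => by
      obtain ⟨q, hq1, hq2⟩ := exists_relax t h
      exact ⟨.cons e b (h e b hA) q, by simp [darts, hq1], by simp [supp, hq2]⟩

end RWalk_s7
end Aux
section Aux2
open List

variable {V E : Type} {G : Multigraph V E} {A B : E → Bool → Prop}

namespace RWalk_s7

lemma exists_split {u v} (p : RWalk_s7 G A u v) (x : V) (hx : x ∈ p.supp) :
    ∃ (q : RWalk_s7 G A u x) (r : RWalk_s7 G A x v),
      q.darts ++ r.darts = p.darts ∧ q.supp ++ r.supp.tail = p.supp := by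
  induction p with
  | nil w =>
      simp only [supp, List.mem_singleton] at hx
      subst hx
      exact ⟨.nil x, .nil x, rfl, by simp [supp]⟩
  | cons e b hA t ih =>
      by_cases hxu : dsrc G e b = x
      · refine ⟨copyR (.nil _) rfl hxu, copyR (.cons e b hA t) hxu rfl, ?_, ?_⟩ <;>
          simp [darts, supp]
      · have hx' : x ∈ t.supp := by
          simp only [supp, List.mem_cons] at hx
          tauto
        obtain ⟨q, r, h1, h2⟩ := ih hx'
        refine ⟨.cons e b hA q, r, ?_, ?_⟩
        · simp [darts, ← h1]
        · simp [supp, ← h2]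

lemma exists_bypass {u v} (p : RWalk_s7 G A u v) :
    ∃ q : RWalk_s7 G A u v, q.supp.Nodup ∧ ∀ d ∈ q.darts, d ∈ p.darts := by
  induction p with
  | nil w => exact ⟨.nil w, by simp [supp], by simp [darts]⟩
  | cons e b hA t ih =>
      obtain ⟨q, hnd, hsub⟩ := ih
      by_cases hu : dsrc G e b ∈ q.supp
      · obtain ⟨q1, q2, hd, hs⟩ := exists_split q _ hu
        refine ⟨q2, ?_, ?_⟩
        · rw [← hs] at hnd
          obtain ⟨t2, ht2⟩ := supp_eq_cons q2
          rw [ht2]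
          refine List.nodup_cons.2 ⟨?_, ?_⟩
          · have hmem : dsrc G e b ∈ q1.supp := end_mem_supp q1
            have := (List.nodup_append'.mp hnd).2.2
            intro hc
            exact this hmem (by rw [ht2]; exact hc)
          · have : q2.supp.tail.Nodup := (List.nodup_append'.mp hnd).2.1
            rw [ht2] at this
            exact this
        · intro d hd'
          have : d ∈ q.darts := by
            rw [← hd]
            exact List.mem_append_right _ hd'
          exact List.mem_cons_of_mem _ (hsub d this)
      · refine ⟨.cons e b hA q, ?_, ?_⟩
        · simp only [supp, List.nodup_cons]
          exact ⟨hu, hnd⟩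
        · simp only [darts, List.mem_cons]
          rintro d (h1 | h2)
          · exact Or.inl h1
          · exact Or.inr (hsub d h2)

lemma dsrc_cases (e : E) (b b' : Bool) :
    dsrc G e b = dsrc G e b' ∨ dsrc G e b = ddst G e b' := by
  cases b <;> cases b' <;> simp [dsrc, ddst]

lemma edgesR_nodup_of_supp : ∀ {u v} (p : RWalk_s7 G A u v), p.supp.Nodup → p.edgesR.Nodup
  | _, _, .nil _ => by simp [edgesR, darts]
  | _, _, .cons e b hA t => by
      intro hnd
      simp only [supp, List.nodup_cons] at hnd
      obtain ⟨hu, hnd⟩ := hnd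
      simp only [edgesR, darts, List.map_cons, List.nodup_cons]
      refine ⟨?_, edgesR_nodup_of_supp t hnd⟩
      intro hc
      obtain ⟨d, hd, he⟩ := List.mem_map.mp hc
      have hmem := dart_mem_supp t d hd
      refine hu ?_
      rcases dsrc_cases (G := G) d.1 b d.2 with h | h <;> rw [he] at h hmem
      · rw [h]; exact hmem.1
      · rw [h]; exact hmem.2

lemma exists_cross (S : Set V) : ∀ {u v} (p : RWalk_s7 G A u v), ¬ (u ∈ S ↔ v ∈ S) →
    ∃ e ∈ p.edgesR, e ∈ G.delta S
  | _, _, .nil w, h => absurd Iff.rfl h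
  | _, _, .cons (w := w) e b hA t, h => by
      by_cases hm : ddst G e b ∈ S ↔ w ∈ S
      · have hcross : ¬ (dsrc G e b ∈ S ↔ ddst G e b ∈ S) := fun hc => h (hc.trans hm)
        refine ⟨e, by simp [edgesR, darts], ?_⟩
        by_cases h1 : dsrc G e b ∈ S
        · have h2 : ddst G e b ∉ S := fun h2 => hcross (iff_of_true h1 h2)
          exact ⟨_, _, inc_dart G e b, h1, h2⟩
        · have h2 : ddst G e b ∈ S := by
            by_contra h2
            exact hcross (iff_of_false h1 h2)
          exact ⟨_, _, (inc_dart G e b).trans Sym2.eq_swap, h2, h1⟩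
      · obtain ⟨e', he', hc⟩ := exists_cross S t hm
        exact ⟨e', by simp only [edgesR, darts, List.map_cons]; exact List.mem_cons_of_mem _ he', hc⟩

lemma exists_ofWalk {u v} (p : G.Walk u v) :
    ∃ r : RWalk_s7 G (fun _ _ => True) u v, r.edgesR = p.edges ∧ r.supp = p.support := by
  induction p with
  | nil w => exact ⟨.nil w, by simp [edgesR, darts, Multigraph.Walk.edges], by simp [supp, Multigraph.Walk.support]⟩
  | cons e he t ih =>
      obtain ⟨r, hr1, hr2⟩ := ih
      have h2 := (he.symm.trans (inc_epr G e))
      rcases Sym2.eq_iff.mp h2 with ⟨ha, hb⟩ | ⟨ha, hb⟩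
      · have hsrc : dsrc G e true = _ := rfl
        refine ⟨copyR (.cons e true trivial (copyR r (by simp [ddst, ← hb]) rfl))
          (by simp [dsrc, ← ha]) rfl, ?_, ?_⟩
        · simp [edgesR, darts, Multigraph.Walk.edges]
          exact hr1
        · simp only [supp_copyR, supp]
          simp [Multigraph.Walk.support, hr2, dsrc, ← ha]
      · refine ⟨copyR (.cons e false trivial (copyR r (by simp [ddst, ← hb]) rfl))
          (by simp [dsrc, ← ha]) rfl, ?_, ?_⟩
        · simp [edgesR, darts, Multigraph.Walk.edges]
          exact hr1
        · simp only [supp_copyR, supp]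
          simp [Multigraph.Walk.support, hr2, dsrc, ← ha]

lemma exists_toWalk {u v} (r : RWalk_s7 G A u v) :
    ∃ p : G.Walk u v, p.edges = r.edgesR ∧ p.support = r.supp := by
  induction r with
  | nil w => exact ⟨.nil w, by simp [edgesR, darts, Multigraph.Walk.edges], by simp [supp, Multigraph.Walk.support]⟩
  | cons e b hA t ih =>
      obtain ⟨p, h1, h2⟩ := ih
      exact ⟨.cons e (inc_dart G e b) p, by simp [Multigraph.Walk.edges, edgesR, darts, h1],
        by simp [Multigraph.Walk.support, supp, h2]⟩

end RWalk_s7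

lemma walk_start_mem_support {u v} (p : G.Walk u v) : u ∈ p.support := by
  cases p <;> simp [Multigraph.Walk.support]

lemma walk_mem_support_of_edge {x y : V} :
    ∀ {u v} (p : G.Walk u v) (e : E), e ∈ p.edges → G.inc e = s(x, y) →
      x ∈ p.support ∧ y ∈ p.support
  | _, _, .nil _, e => by simp [Multigraph.Walk.edges]
  | _, _, .cons e' he' t, e => by
      intro he hxy
      simp only [Multigraph.Walk.edges, List.mem_cons] at he
      simp only [Multigraph.Walk.support, List.mem_cons]
      rcases he with h1 | h2
      · subst h1
        rcases Sym2.eq_iff.mp (he'.symm.trans hxy) with ⟨ha, hb⟩ | ⟨ha, hb⟩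
        · exact ⟨Or.inl ha.symm, Or.inr (hb ▸ walk_start_mem_support t)⟩
        · exact ⟨Or.inr (hb ▸ walk_start_mem_support t), Or.inl ha.symm⟩
      · have := walk_mem_support_of_edge t e h2 hxy
        exact ⟨Or.inr this.1, Or.inr this.2⟩

end Aux2
section Flow
open List

attribute [local instance] Classical.propDecidable

variable {V E : Type} [Fintype V] [Fintype E] (G : Multigraph V E)

noncomputable def divg (f : E → ℤ) (w : V) : ℤ :=
  (∑ e : E, if (epr G e).2 = w then f e else 0) - (∑ e : E, if (epr G e).1 = w then f e else 0)

lemma ite_add_zero' (h : Prop) [Decidable h] (a b : ℤ) :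
    (if h then a + b else 0) = (if h then a else 0) + (if h then b else 0) := by
  split <;> simp

lemma ite_sub_zero' (h : Prop) [Decidable h] (a b : ℤ) :
    (if h then a - b else 0) = (if h then a else 0) - (if h then b else 0) := by
  split <;> simp

lemma divg_add (f g : E → ℤ) (w : V) :
    divg G (fun e => f e + g e) w = divg G f w + divg G g w := by
  simp only [divg, ite_add_zero', Finset.sum_add_distrib]
  ring

lemma divg_sub (f g : E → ℤ) (w : V) :
    divg G (fun e => f e - g e) w = divg G f w - divg G g w := by
  simp only [divg, ite_sub_zero', Finset.sum_sub_distrib]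
  ring

lemma divg_zero (w : V) : divg G (fun _ => 0) w = 0 := by simp [divg]

noncomputable def dflow (e : E) (b : Bool) : E → ℤ :=
  fun e' => if e' = e then (if b then 1 else -1) else 0

lemma divg_dflow (e : E) (b : Bool) (w : V) :
    divg G (dflow e b) w
      = (if ddst G e b = w then 1 else 0) - (if dsrc G e b = w then 1 else 0) := by
  simp only [divg, dflow]
  rw [Finset.sum_eq_single e (by intro e' _ hne; simp [hne]) (by simp),
    Finset.sum_eq_single e (by intro e' _ hne; simp [hne]) (by simp)]
  cases b <;> simp [dsrc, ddst] <;> split_ifs <;> ring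

noncomputable def lflow (l : List (E × Bool)) : E → ℤ :=
  fun e => (l.map (fun d => dflow d.1 d.2 e)).sum

lemma lflow_nil : lflow ([] : List (E × Bool)) = fun _ => 0 := by
  funext e; simp [lflow]

lemma lflow_cons (d : E × Bool) (l : List (E × Bool)) :
    lflow (d :: l) = fun e => dflow d.1 d.2 e + lflow l e := by
  funext e; simp [lflow]

lemma lflow_cons_apply (d : E × Bool) (l : List (E × Bool)) (e : E) :
    lflow (d :: l) e = dflow d.1 d.2 e + lflow l e := by simp [lflow]

lemma lflow_eq_zero (l : List (E × Bool)) (e : E) (he : e ∉ l.map Prod.fst) :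
    lflow l e = 0 := by
  induction l with
  | nil => simp [lflow]
  | cons d l ih =>
      simp only [List.map_cons, List.mem_cons, not_or] at he
      rw [lflow_cons_apply]
      simp only [dflow, if_neg he.1, zero_add]
      exact ih he.2

lemma lflow_eq (l : List (E × Bool)) (hnd : (l.map Prod.fst).Nodup) (d : E × Bool)
    (hd : d ∈ l) : lflow l d.1 = if d.2 then 1 else -1 := by
  induction l with
  | nil => simp at hd
  | cons a l ih =>
      simp only [List.map_cons, List.nodup_cons] at hnd
      rw [lflow_cons_apply]
      rcases List.mem_cons.1 hd with h1 | h2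
      · subst h1
        rw [lflow_eq_zero l d.1 hnd.1]
        simp [dflow]
      · have hne : d.1 ≠ a.1 := by
          intro hc
          exact hnd.1 (hc ▸ List.mem_map_of_mem (f := Prod.fst) h2)
        simp only [dflow, if_neg hne, zero_add]
        exact ih hnd.2 h2

def CapF (f : E → ℤ) : Prop := ∀ e, -1 ≤ f e ∧ f e ≤ 1

def IsFlow (f : E → ℤ) (u v : V) (n : ℤ) : Prop :=
  (∀ w, w ≠ u → w ≠ v → divg G f w = 0) ∧ divg G f u = -n ∧ divg G f v = n

def RCond (f : E → ℤ) (e : E) (b : Bool) : Prop := if b then f e ≤ 0 else 0 ≤ f e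
def DCond (f : E → ℤ) (e : E) (b : Bool) : Prop := if b then 0 < f e else f e < 0

lemma sum_divg_cut (f : E → ℤ) (S : Set V) :
    ∑ w ∈ Finset.univ.filter (fun x => x ∈ S), divg G f w
      = ∑ e : E, ((if (epr G e).2 ∈ S then f e else 0) - (if (epr G e).1 ∈ S then f e else 0)) := by
  have key : ∀ (c : V) (a : ℤ),
      (∑ w ∈ Finset.univ.filter (fun x => x ∈ S), if c = w then a else 0)
        = if c ∈ S then a else 0 := by
    intro c a
    rw [Finset.sum_ite_eq]
    simp
  calc ∑ w ∈ Finset.univ.filter (fun x => x ∈ S), divg G f w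
      = (∑ w ∈ Finset.univ.filter (fun x => x ∈ S), ∑ e : E, if (epr G e).2 = w then f e else 0)
        - (∑ w ∈ Finset.univ.filter (fun x => x ∈ S), ∑ e : E, if (epr G e).1 = w then f e else 0) := by
        simp only [divg, Finset.sum_sub_distrib]
    _ = (∑ e : E, ∑ w ∈ Finset.univ.filter (fun x => x ∈ S), if (epr G e).2 = w then f e else 0)
        - (∑ e : E, ∑ w ∈ Finset.univ.filter (fun x => x ∈ S), if (epr G e).1 = w then f e else 0) := by
        rw [Finset.sum_comm, Finset.sum_comm (s := Finset.univ.filter (fun x => x ∈ S))]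
    _ = _ := by
        rw [← Finset.sum_sub_distrib]
        exact Finset.sum_congr rfl fun e _ => by rw [key, key]

lemma cut_value {u v : V} (f : E → ℤ) (n : ℤ) (hf : IsFlow G f u v n) (S : Set V)
    (huS : u ∈ S) (hvS : v ∉ S) :
    ∑ e : E, ((if (epr G e).2 ∈ S then f e else 0) - (if (epr G e).1 ∈ S then f e else 0))
      = -n := by
  rw [← sum_divg_cut]
  rw [Finset.sum_eq_single u]
  · exact hf.2.1
  · intro w hw hwu
    have hwS : w ∈ S := (Finset.mem_filter.1 hw).2
    exact hf.1 w hwu (fun hc => hvS (hc ▸ hwS))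
  · intro hc
    exact absurd (Finset.mem_filter.2 ⟨Finset.mem_univ u, huS⟩) hc

def crossP (S : Set V) (e : E) : Prop :=
  ((epr G e).1 ∈ S ∧ (epr G e).2 ∉ S) ∨ ((epr G e).2 ∈ S ∧ (epr G e).1 ∉ S)

lemma delta_eq_crossing (S : Set V) :
    G.delta S = {e | crossP G S e} := by
  ext e
  constructor
  · rintro ⟨x, y, hxy, hx, hy⟩
    rcases Sym2.eq_iff.mp ((inc_epr G e).symm.trans hxy) with ⟨h1, h2⟩ | ⟨h1, h2⟩
    · exact Or.inl ⟨h1 ▸ hx, h2 ▸ hy⟩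
    · exact Or.inr ⟨h2 ▸ hx, h1 ▸ hy⟩
  · rintro (⟨h1, h2⟩ | ⟨h1, h2⟩)
    · exact ⟨_, _, inc_epr G e, h1, h2⟩
    · exact ⟨_, _, (inc_epr G e).trans Sym2.eq_swap, h1, h2⟩

lemma delta_ncard_eq (S : Set V) :
    ((G.delta S).ncard : ℤ) = (Finset.univ.filter (crossP G S)).card := by
  have : G.delta S = ↑(Finset.univ.filter (crossP G S)) := by
    rw [delta_eq_crossing]
    ext e; simp
  rw [this, Set.ncard_coe_finset]

lemma stuck_cut {u v : V} (f : E → ℤ) (hcap : CapF f) (n : ℤ) (hf : IsFlow G f u v n)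
    (S : Set V)
    (hclosed : ∀ (e : E) (b : Bool), dsrc G e b ∈ S → RCond f e b → ddst G e b ∈ S)
    (huS : u ∈ S) (hvS : v ∉ S) :
    ((G.delta S).ncard : ℤ) = n := by
  have hval := cut_value G f n hf S huS hvS
  have hterm : ∀ e : E,
      ((if (epr G e).2 ∈ S then f e else 0) - (if (epr G e).1 ∈ S then f e else 0))
        = -(if crossP G S e then 1 else 0) := by
    intro e
    by_cases h1 : (epr G e).1 ∈ S <;> by_cases h2 : (epr G e).2 ∈ S
    · simp [crossP, h1, h2]
    · -- e1 in, e2 out : dart (e,true) blocked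
      have hb : ¬ RCond f e true := by
        intro hr
        exact h2 (hclosed e true (by simpa [dsrc] using h1) hr)
      simp only [RCond, if_true] at hb
      push_neg at hb
      have : f e = 1 := le_antisymm (hcap e).2 hb
      simp only [ddst] at *
      rw [if_neg h2, if_pos h1, this]
      simp [crossP, h1, h2]
    · have hb : ¬ RCond f e false := by
        intro hr
        exact h1 (hclosed e false (by simpa [dsrc] using h2) hr)
      simp only [RCond, if_false, Bool.false_eq_true] at hb
      push_neg at hb
      have : f e = -1 := le_antisymm (by omega) (hcap e).1
      rw [if_pos h2, if_neg h1, this]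
      simp [crossP, h1, h2]
    · simp [crossP, h1, h2]
  rw [Finset.sum_congr rfl (fun e _ => hterm e), Finset.sum_neg_distrib] at hval
  have hb : ∑ e : E, (if crossP G S e then (1:ℤ) else 0)
      = ((Finset.univ.filter (crossP G S)).card : ℤ) := by simp [Finset.sum_boole]
  rw [hb] at hval
  rw [delta_ncard_eq]
  omega

lemma dstuck_cut {u v : V} (f : E → ℤ) (n : ℤ) (hf : IsFlow G f u v n)
    (S : Set V)
    (hclosed : ∀ (e : E) (b : Bool), dsrc G e b ∈ S → DCond f e b → ddst G e b ∈ S)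
    (huS : u ∈ S) (hvS : v ∉ S) : n ≤ 0 := by
  have hval := cut_value G f n hf S huS hvS
  have hterm : ∀ e : E,
      0 ≤ ((if (epr G e).2 ∈ S then f e else 0) - (if (epr G e).1 ∈ S then f e else 0)) := by
    intro e
    by_cases h1 : (epr G e).1 ∈ S <;> by_cases h2 : (epr G e).2 ∈ S
    · simp [h1, h2]
    · have hb : ¬ DCond f e true := fun hr => h2 (hclosed e true (by simpa [dsrc] using h1) hr)
      simp only [DCond, if_true] at hb
      push_neg at hb
      rw [if_neg h2, if_pos h1]
      omega
    · have hb : ¬ DCond f e false := fun hr => h1 (hclosed e false (by simpa [dsrc] using h2) hr)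
      simp only [DCond, if_false, Bool.false_eq_true] at hb
      push_neg at hb
      rw [if_pos h2, if_neg h1]
      omega
    · simp [h1, h2]
  have : (0:ℤ) ≤ ∑ e : E, ((if (epr G e).2 ∈ S then f e else 0) - (if (epr G e).1 ∈ S then f e else 0)) :=
    Finset.sum_nonneg fun e _ => hterm e
  omega

end Flow
section Flow2
open List

attribute [local instance] Classical.propDecidable

variable {V E : Type} [Fintype V] [Fintype E] {G : Multigraph V E} {A : E → Bool → Prop}

lemma divg_lflow : ∀ {u v} (p : RWalk_s7 G A u v) (w : V),
    divg G (lflow p.darts) w = (if v = w then 1 else 0) - (if u = w then 1 else 0)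
  | _, _, .nil x, w => by
      simp only [RWalk_s7.darts, lflow_nil, divg_zero]
      ring
  | _, _, .cons e b hA t, w => by
      have heq : lflow ((RWalk_s7.cons e b hA t).darts)
          = fun x => dflow e b x + lflow t.darts x := by
        simp only [RWalk_s7.darts]
        exact lflow_cons (e, b) t.darts
      rw [heq, divg_add, divg_dflow, divg_lflow t w]
      ring

lemma augment_s7 {u v : V} (f : E → ℤ) (hcap : CapF f) (n : ℤ) (hf : IsFlow G f u v n)
    (r : RWalk_s7 G (RCond f) u v) (huv : u ≠ v) :
    ∃ f', CapF f' ∧ IsFlow G f' u v (n + 1) := by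
  obtain ⟨r', hnd, hsub⟩ := RWalk_s7.exists_bypass r
  have hend : (RWalk_s7.edgesR r').Nodup := RWalk_s7.edgesR_nodup_of_supp r' hnd
  refine ⟨fun e => f e + lflow r'.darts e, ?_, ?_, ?_, ?_⟩
  · intro e
    show -1 ≤ f e + lflow r'.darts e ∧ f e + lflow r'.darts e ≤ 1
    by_cases he : e ∈ r'.edgesR
    · obtain ⟨d, hd, hde⟩ := List.mem_map.mp he
      have hl : lflow r'.darts d.1 = if d.2 then 1 else -1 := lflow_eq _ hend d hd
      have hr : RCond f d.1 d.2 := RWalk_s7.darts_prop r' d hd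
      have hc := hcap d.1
      rw [← hde]
      cases hb : d.2 <;> rw [hb] at hl hr <;>
        simp only [RCond, Bool.false_eq_true, reduceIte] at hr hl <;>
        rw [hl] <;> constructor <;> omega
    · rw [lflow_eq_zero _ e he]
      have := hcap e
      constructor <;> omega
  · intro w hwu hwv
    rw [divg_add, divg_lflow r' w, hf.1 w hwu hwv, if_neg (fun hc => hwv hc.symm),
      if_neg (fun hc => hwu hc.symm)]
    ring
  · rw [divg_add, divg_lflow r' u, hf.2.1, if_neg (fun hc : v = u => huv hc.symm), if_pos rfl]
    ring
  · rw [divg_add, divg_lflow r' v, hf.2.2, if_pos rfl, if_neg huv]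
    ring

lemma exists_flow {u v : V} (huv : u ≠ v)
    (hcut : ∀ S : Set V, u ∈ S → v ∉ S → 3 ≤ (G.delta S).ncard) :
    ∀ n : ℕ, n ≤ 3 → ∃ f : E → ℤ, CapF f ∧ IsFlow G f u v n := by
  intro n
  induction n with
  | zero =>
      intro _
      refine ⟨fun _ => 0, fun e => ⟨by norm_num, by norm_num⟩,
        fun w _ _ => divg_zero G w, by simp [divg_zero], by simp [divg_zero]⟩
  | succ n ih =>
      intro hn
      obtain ⟨f, hcap, hf⟩ := ih (by omega)
      set S := {x | Nonempty (RWalk_s7 G (RCond f) u x)} with hS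
      by_cases hv : v ∈ S
      · obtain ⟨r⟩ := hv
        obtain ⟨f', h1, h2⟩ := augment_s7 f hcap n hf r huv
        exact ⟨f', h1, by push_cast; exact h2⟩
      · exfalso
        have hclosed : ∀ (e : E) (b : Bool), dsrc G e b ∈ S → RCond f e b → ddst G e b ∈ S := by
          intro e b hsrc hr
          obtain ⟨r⟩ := hsrc
          exact ⟨RWalk_s7.appendR r (.cons e b hr (.nil _))⟩
        have huS : u ∈ S := ⟨.nil u⟩
        have := stuck_cut G f hcap n hf S hclosed huS hv
        have h3 := hcut S huS hv
        omega

lemma extract_path {u v : V} (f : E → ℤ) (hcap : CapF f) (n : ℤ) (hf : IsFlow G f u v n)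
    (hn : 0 < n) :
    ∃ (r : RWalk_s7 G (fun _ _ => True) u v) (f' : E → ℤ), r.supp.Nodup ∧
      (∀ e ∈ r.edgesR, f e ≠ 0) ∧ CapF f' ∧ IsFlow G f' u v (n - 1) ∧
      (∀ e, f' e ≠ 0 → f e ≠ 0) ∧ (∀ e ∈ r.edgesR, f' e = 0) := by
  set S := {x | Nonempty (RWalk_s7 G (DCond f) u x)} with hS
  have hv : v ∈ S := by
    by_contra hv
    have hclosed : ∀ (e : E) (b : Bool), dsrc G e b ∈ S → DCond f e b → ddst G e b ∈ S := by
      intro e b hsrc hr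
      obtain ⟨r⟩ := hsrc
      exact ⟨RWalk_s7.appendR r (.cons e b hr (.nil _))⟩
    have := dstuck_cut G f n hf S hclosed ⟨.nil u⟩ hv
    omega
  obtain ⟨r0⟩ := hv
  obtain ⟨r1, hnd, hsub⟩ := RWalk_s7.exists_bypass r0
  have hend : (RWalk_s7.edgesR r1).Nodup := RWalk_s7.edgesR_nodup_of_supp r1 hnd
  have hDart : ∀ d ∈ r1.darts, DCond f d.1 d.2 := fun d hd => RWalk_s7.darts_prop r1 d hd
  have hfe : ∀ e ∈ r1.edgesR, f e ≠ 0 := by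
    intro e he
    obtain ⟨d, hd, hde⟩ := List.mem_map.mp he
    have hD := hDart d hd
    rw [← hde]
    cases hb : d.2 <;> rw [hb] at hD <;>
      simp only [DCond, Bool.false_eq_true, reduceIte] at hD <;> omega
  have hzero : ∀ e ∈ r1.edgesR, f e - lflow r1.darts e = 0 := by
    intro e he
    obtain ⟨d, hd, hde⟩ := List.mem_map.mp he
    have hl : lflow r1.darts d.1 = if d.2 then 1 else -1 := lflow_eq _ hend d hd
    have hD := hDart d hd
    have hc := hcap d.1
    rw [← hde]
    cases hb : d.2 <;> rw [hb] at hl hD <;>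
      simp only [DCond, Bool.false_eq_true, reduceIte] at hD hl <;> rw [hl] <;> omega
  obtain ⟨r, hr1, hr2⟩ := RWalk_s7.exists_relax (B := fun _ _ => True) r1 (fun _ _ _ => trivial)
  have hredges : r.edgesR = r1.edgesR := by simp [RWalk_s7.edgesR, hr1]
  refine ⟨r, fun e => f e - lflow r1.darts e, by rw [hr2]; exact hnd,
    by rw [hredges]; exact hfe, ?_, ?_, ?_, by rw [hredges]; exact hzero⟩
  · intro e
    show -1 ≤ f e - lflow r1.darts e ∧ f e - lflow r1.darts e ≤ 1
    by_cases he : e ∈ r1.edgesR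
    · have := hzero e he
      constructor <;> omega
    · rw [lflow_eq_zero _ e he]
      have := hcap e
      constructor <;> omega
  · have huv : u ≠ v := by
      intro hc
      subst hc
      have h1 := hf.2.1
      have h2 := hf.2.2
      omega
    refine ⟨?_, ?_, ?_⟩
    · intro w hwu hwv
      rw [divg_sub, divg_lflow r1 w, hf.1 w hwu hwv, if_neg (fun hc => hwv hc.symm),
        if_neg (fun hc => hwu hc.symm)]
      ring
    · rw [divg_sub, divg_lflow r1 u, hf.2.1, if_neg (fun hc : v = u => huv hc.symm), if_pos rfl]
      ring
    · rw [divg_sub, divg_lflow r1 v, hf.2.2, if_pos rfl, if_neg huv]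
      ring
  · intro e hne
    rw [show (fun e => f e - lflow r1.darts e) e = f e - lflow r1.darts e from rfl] at hne
    by_cases he : e ∈ r1.edgesR
    · exact hfe e he
    · rw [lflow_eq_zero _ e he] at hne
      intro hc
      exact hne (by omega)

lemma menger3 {u v : V} (huv : u ≠ v)
    (hcut : ∀ S : Set V, u ∈ S → v ∉ S → 3 ≤ (G.delta S).ncard) :
    Multigraph.ThreePaths G u v := by
  obtain ⟨f3, hcap3, hf3⟩ := exists_flow huv hcut 3 le_rfl
  have hc3 : ((3:ℕ):ℤ) = 3 := by norm_num
  rw [hc3] at hf3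
  obtain ⟨r1, f2, hnd1, hr1, hcap2, hf2, hmon2, hz2⟩ :=
    extract_path f3 hcap3 3 hf3 (by norm_num)
  obtain ⟨r2, f1, hnd2, hr2, hcap1, hf1, hmon1, hz1⟩ :=
    extract_path f2 hcap2 (3-1) hf2 (by norm_num)
  obtain ⟨r3, f0, hnd3, hr3, _, _, _, _⟩ :=
    extract_path f1 hcap1 (3-1-1) hf1 (by norm_num)
  obtain ⟨p1, hp1e, hp1s⟩ := RWalk_s7.exists_toWalk r1
  obtain ⟨p2, hp2e, hp2s⟩ := RWalk_s7.exists_toWalk r2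
  obtain ⟨p3, hp3e, hp3s⟩ := RWalk_s7.exists_toWalk r3
  have d12 : ∀ e ∈ r1.edgesR, e ∉ r2.edgesR := by
    intro e he hc
    exact hr2 e hc (hz2 e he)
  have d13 : ∀ e ∈ r1.edgesR, e ∉ r3.edgesR := by
    intro e he hc
    exact hmon1 e (hr3 e hc) (hz2 e he)
  have d23 : ∀ e ∈ r2.edgesR, e ∉ r3.edgesR := by
    intro e he hc
    exact hr3 e hc (hz1 e he)
  refine ⟨p1, p2, p3, by rw [Multigraph.Walk.IsPath, hp1s]; exact hnd1,
    by rw [Multigraph.Walk.IsPath, hp2s]; exact hnd2,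
    by rw [Multigraph.Walk.IsPath, hp3s]; exact hnd3, ?_, ?_, ?_⟩
  · intro e he; rw [hp1e] at he; rw [hp2e]; exact d12 e he
  · intro e he; rw [hp1e] at he; rw [hp3e]; exact d13 e he
  · intro e he; rw [hp2e] at he; rw [hp3e]; exact d23 e he

end Flow2
section EasyDir
open List

variable {V E : Type} [Fintype V] [Fintype E] {G : Multigraph V E}

lemma three_le_ncard_s7 {α : Type} [Finite α] {s : Set α} {a b c : α}
    (ha : a ∈ s) (hb : b ∈ s) (hc : c ∈ s) (hab : a ≠ b) (hac : a ≠ c) (hbc : b ≠ c) :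
    3 ≤ s.ncard := by
  have hsub : ({a, b, c} : Set α) ⊆ s := by
    intro x hx
    simp only [Set.mem_insert_iff, Set.mem_singleton_iff] at hx
    rcases hx with rfl | rfl | rfl <;> assumption
  have h3 : ({a, b, c} : Set α).ncard = 3 := by
    rw [Set.ncard_insert_of_notMem (by simp [hab, hac]), Set.ncard_pair hbc]
  calc (3:ℕ) = ({a, b, c} : Set α).ncard := h3.symm
    _ ≤ s.ncard := Set.ncard_le_ncard hsub (Set.toFinite s)

lemma sameSide_of_eqvGen {u v : V} (h : Relation.EqvGen (Multigraph.ThreeEC G) u v) :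
    ∀ S : Set V, (G.delta S).ncard ≤ 2 → (u ∈ S ↔ v ∈ S) := by
  induction h with
  | rel x y hxy =>
      intro S hS
      rcases hxy with rfl | ⟨p1, p2, p3, _, _, _, h12, h13, h23⟩
      · exact Iff.rfl
      · by_contra hc
        obtain ⟨r1, hr1e, _⟩ := RWalk_s7.exists_ofWalk p1
        obtain ⟨r2, hr2e, _⟩ := RWalk_s7.exists_ofWalk p2
        obtain ⟨r3, hr3e, _⟩ := RWalk_s7.exists_ofWalk p3
        obtain ⟨e1, he1, hd1⟩ := RWalk_s7.exists_cross S r1 hc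
        obtain ⟨e2, he2, hd2⟩ := RWalk_s7.exists_cross S r2 hc
        obtain ⟨e3, he3, hd3⟩ := RWalk_s7.exists_cross S r3 hc
        rw [hr1e] at he1
        rw [hr2e] at he2
        rw [hr3e] at he3
        have h12' : e1 ≠ e2 := fun hc' => h12 e1 he1 (hc' ▸ he2)
        have h13' : e1 ≠ e3 := fun hc' => h13 e1 he1 (hc' ▸ he3)
        have h23' : e2 ≠ e3 := fun hc' => h23 e2 he2 (hc' ▸ he3)
        have := three_le_ncard_s7 hd1 hd2 hd3 h12' h13' h23'
        omega
  | refl x => intro S _; exact Iff.rfl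
  | symm x y _ ih => intro S hS; exact (ih S hS).symm
  | trans x y z _ _ ih1 ih2 => intro S hS; exact (ih1 S hS).trans (ih2 S hS)

lemma exists_small_cut {x y : V} (h : ¬ Relation.EqvGen (Multigraph.ThreeEC G) x y) :
    ∃ S : Set V, x ∈ S ∧ y ∉ S ∧ (G.delta S).ncard ≤ 2 := by
  have hxy : x ≠ y := fun hc => h (hc ▸ Relation.EqvGen.refl x)
  have h3 : ¬ Multigraph.ThreePaths G x y :=
    fun hp => h (Relation.EqvGen.rel _ _ (Or.inr hp))
  by_contra hc
  push_neg at hc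
  exact h3 (menger3 hxy (fun S hS1 hS2 => by have := hc S hS1 hS2; omega))

lemma quot_small_cut (G : Multigraph V E)
    (a b : Quotient (Multigraph.tccSetoid G)) (hab : a ≠ b) :
    ∃ T : Set (Quotient (Multigraph.tccSetoid G)), a ∈ T ∧ b ∉ T ∧
      ((G.quot (Multigraph.tccSetoid G)).delta T).ncard ≤ 2 := by
  obtain ⟨x, rfl⟩ := Quotient.exists_rep a
  obtain ⟨y, rfl⟩ := Quotient.exists_rep b
  have hnr : ¬ Relation.EqvGen (Multigraph.ThreeEC G) x y := by
    intro hr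
    exact hab (Quotient.sound hr)
  obtain ⟨S, hxS, hyS, hS⟩ := exists_small_cut hnr
  have hsat : ∀ w : V,
      (Quotient.mk (Multigraph.tccSetoid G) w ∈ Quotient.mk (Multigraph.tccSetoid G) '' S)
        ↔ w ∈ S := by
    intro w
    constructor
    · rintro ⟨z, hz, hzw⟩
      have hr : Relation.EqvGen (Multigraph.ThreeEC G) z w := Quotient.exact hzw
      exact (sameSide_of_eqvGen hr S hS).1 hz
    · intro hw; exact ⟨w, hw, rfl⟩
  refine ⟨Quotient.mk (Multigraph.tccSetoid G) '' S, ⟨x, hxS, rfl⟩, ?_, ?_⟩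
  · intro hc
    exact hyS ((hsat y).1 hc)
  · have hsub : Subtype.val ''
        ((G.quot (Multigraph.tccSetoid G)).delta (Quotient.mk (Multigraph.tccSetoid G) '' S))
          ⊆ G.delta S := by
      rintro e ⟨ee, hee, rfl⟩
      obtain ⟨X, Y, hinc, hX, hY⟩ := hee
      obtain ⟨p, hp⟩ := sym2_exists_pair (G.inc ee.1)
      rw [show (G.quot (Multigraph.tccSetoid G)).inc ee
          = Sym2.map (Quotient.mk (Multigraph.tccSetoid G)) (G.inc ee.1) from rfl, hp,
        Sym2.map_pair_eq] at hinc
      rcases Sym2.eq_iff.mp hinc with ⟨h1, h2⟩ | ⟨h1, h2⟩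
      · exact ⟨p.1, p.2, hp, (hsat p.1).1 (h1 ▸ hX),
          fun hcc => hY (h2 ▸ ((hsat p.2).2 hcc))⟩
      · exact ⟨p.2, p.1, hp.trans Sym2.eq_swap, (hsat p.2).1 (h2 ▸ hX),
          fun hcc => hY (h1 ▸ ((hsat p.1).2 hcc))⟩
    calc ((G.quot (Multigraph.tccSetoid G)).delta (Quotient.mk (Multigraph.tccSetoid G) '' S)).ncard
        = (Subtype.val ''
            ((G.quot (Multigraph.tccSetoid G)).delta
              (Quotient.mk (Multigraph.tccSetoid G) '' S))).ncard :=
          (Set.ncard_image_of_injective _ Subtype.val_injective).symm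
      _ ≤ (G.delta S).ncard := Set.ncard_le_ncard hsub (Set.toFinite _)
      _ ≤ 2 := hS

end EasyDir
section Ear
open List

variable {V E : Type} {H : Multigraph V E}

lemma ddst_eq_dsrc_not (e : E) (b : Bool) : ddst H e b = dsrc H e (!b) := by
  cases b <;> simp [dsrc, ddst]

lemma inner_ear (V₁ : Set V) (E₁ : Set E)
    (hE : ∀ (e : E) (b : Bool), e ∈ E₁ → dsrc H e b ∈ V₁) :
    ∀ {y z} (Q : RWalk_s7 H (fun _ _ => True) y z), y ∉ V₁ → z ∈ V₁ →
      ∃ (c : V) (P : RWalk_s7 H (fun _ _ => True) y c), c ∈ V₁ ∧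
        (∀ e ∈ P.edgesR, e ∉ E₁) ∧ P.supp <+: Q.supp ∧ P.edgesR <+: Q.edgesR
  | _, _, .nil w, hy, hz => absurd hz hy
  | _, _, .cons (w := w) e b hA t, hy, hz => by
      by_cases hd : ddst H e b ∈ V₁
      · refine ⟨ddst H e b, .cons e b trivial (.nil _), hd, ?_, ?_, ?_⟩
        · intro e' he'
          have he2 : e' = e := by simpa [RWalk_s7.edgesR, RWalk_s7.darts] using he'
          intro hc
          exact hy (hE e b (he2 ▸ hc))
        · obtain ⟨tt, htt⟩ := RWalk_s7.supp_eq_cons t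
          simp only [RWalk_s7.supp, htt]
          exact ⟨tt, rfl⟩
        · simp only [RWalk_s7.edgesR, RWalk_s7.darts, List.map_cons, List.map_nil]
          exact ⟨t.edgesR, rfl⟩
      · obtain ⟨c, P, hc, hP, hps, hpe⟩ := inner_ear V₁ E₁ hE t hd hz
        refine ⟨c, .cons e b trivial P, hc, ?_, ?_, ?_⟩
        · intro e' he'
          rcases (by simpa [RWalk_s7.edgesR, RWalk_s7.darts] using he' : e' = e ∨ e' ∈ P.edgesR)
            with h1 | h2
          · intro hc'
            exact hy (hE e b (h1 ▸ hc'))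
          · exact hP e' h2
        · simp only [RWalk_s7.supp]
          exact List.cons_prefix_cons.mpr ⟨rfl, hps⟩
        · simp only [RWalk_s7.edgesR, RWalk_s7.darts, List.map_cons]
          exact List.cons_prefix_cons.mpr ⟨rfl, hpe⟩

lemma find_ear (V₁ : Set V) (E₁ : Set E)
    (hE : ∀ (e : E) (b : Bool), e ∈ E₁ → dsrc H e b ∈ V₁) :
    ∀ {x z} (W : RWalk_s7 H (fun _ _ => True) x z), x ∈ V₁ → z ∈ V₁ →
      (∃ e ∈ W.edgesR, e ∉ E₁) →
      ∃ (a c : V) (P : RWalk_s7 H (fun _ _ => True) a c), a ∈ V₁ ∧ c ∈ V₁ ∧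
        P.edgesR ≠ [] ∧ (∀ e ∈ P.edgesR, e ∉ E₁) ∧
        P.supp <:+: W.supp ∧ P.edgesR <:+: W.edgesR
  | _, _, .nil w, hx, hz, hmix => by simp [RWalk_s7.edgesR, RWalk_s7.darts] at hmix
  | _, _, .cons (w := w) e b hA t, hx, hz, hmix => by
      by_cases he : e ∈ E₁
      · have hmid : ddst H e b ∈ V₁ := by rw [ddst_eq_dsrc_not]; exact hE e (!b) he
        have hmix' : ∃ e' ∈ t.edgesR, e' ∉ E₁ := by
          obtain ⟨e', he1, he2⟩ := hmix
          rcases (by simpa [RWalk_s7.edgesR, RWalk_s7.darts] using he1 : e' = e ∨ e' ∈ t.edgesR)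
            with h1 | h2
          · exact absurd (h1 ▸ he) he2
          · exact ⟨e', h2, he2⟩
        obtain ⟨a, c, P, h1, h2, h3, h4, h5, h6⟩ := find_ear V₁ E₁ hE t hmid hz hmix'
        refine ⟨a, c, P, h1, h2, h3, h4, ?_, ?_⟩
        · obtain ⟨s, t', hst⟩ := h5
          exact ⟨dsrc H e b :: s, t', by simp only [RWalk_s7.supp]; rw [← hst]; simp⟩
        · obtain ⟨s, t', hst⟩ := h6
          exact ⟨e :: s, t',
            by rw [show (RWalk_s7.cons e b hA t).edgesR = e :: t.edgesR from
              by simp [RWalk_s7.edgesR, RWalk_s7.darts], ← hst]; simp⟩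
      · by_cases hdv : ddst H e b ∈ V₁
        · refine ⟨dsrc H e b, ddst H e b, .cons e b trivial (.nil _), hx, hdv,
            by simp [RWalk_s7.edgesR, RWalk_s7.darts], ?_, ?_, ?_⟩
          · intro e' he'
            have he2 : e' = e := by simpa [RWalk_s7.edgesR, RWalk_s7.darts] using he'
            exact he2 ▸ he
          · obtain ⟨tt, htt⟩ := RWalk_s7.supp_eq_cons t
            simp only [RWalk_s7.supp, htt]
            exact ⟨[], tt, rfl⟩
          · simp only [RWalk_s7.edgesR, RWalk_s7.darts, List.map_cons, List.map_nil]
            exact ⟨[], t.edgesR, rfl⟩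
        · obtain ⟨c, P, hc, hP, hps, hpe⟩ := inner_ear V₁ E₁ hE t hdv hz
          refine ⟨dsrc H e b, c, .cons e b trivial P, hx, hc,
            by simp [RWalk_s7.edgesR, RWalk_s7.darts], ?_, ?_, ?_⟩
          · intro e' he'
            rcases (by simpa [RWalk_s7.edgesR, RWalk_s7.darts] using he' : e' = e ∨ e' ∈ P.edgesR)
              with h1 | h2
            · exact h1 ▸ he
            · exact hP e' h2
          · simp only [RWalk_s7.supp]
            exact (List.cons_prefix_cons.mpr ⟨rfl, hps⟩).isInfix
          · simp only [RWalk_s7.edgesR, RWalk_s7.darts, List.map_cons]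
            exact (List.cons_prefix_cons.mpr ⟨rfl, hpe⟩).isInfix

lemma exists_rotation {u : V} (p : H.Walk u u) (hnd : p.support.tail.Nodup) (x : V)
    (hx : x ∈ p.support) :
    ∃ W : RWalk_s7 H (fun _ _ => True) x x, W.edgesR.Perm p.edges ∧ W.supp.tail.Nodup := by
  obtain ⟨r, hre, hrs⟩ := RWalk_s7.exists_ofWalk p
  have hx' : x ∈ r.supp := by rw [hrs]; exact hx
  obtain ⟨q, s, hds, hss⟩ := RWalk_s7.exists_split r x hx'
  have hqsupp := RWalk_s7.supp_eq_cons q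
  obtain ⟨tq, htq⟩ := hqsupp
  obtain ⟨ts, hts⟩ := RWalk_s7.supp_eq_cons s
  refine ⟨RWalk_s7.appendR s q, ?_, ?_⟩
  · have h1 : (RWalk_s7.appendR s q).edgesR = s.edgesR ++ q.edgesR := by
      simp [RWalk_s7.edgesR, RWalk_s7.darts_appendR]
    have h2 : q.edgesR ++ s.edgesR = p.edges := by
      rw [← hre]
      simp [RWalk_s7.edgesR, ← List.map_append, hds]
    rw [h1, ← h2]
    exact List.perm_append_comm
  · have hsupp : (RWalk_s7.appendR s q).supp = s.supp ++ tq := by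
      rw [RWalk_s7.supp_appendR, htq]
      rfl
    have htail : (RWalk_s7.appendR s q).supp.tail = ts ++ tq := by
      rw [hsupp, hts]
      rfl
    have hptail : p.support.tail = tq ++ ts := by
      have : p.support = q.supp ++ s.supp.tail := by rw [hss, hrs]
      rw [this, htq, hts]
      rfl
    rw [htail]
    exact (List.perm_append_comm.nodup_iff).mp (hptail ▸ hnd)

lemma exists_arcs {u₁ : V} (p₁ : H.Walk u₁ u₁) (hnd : p₁.edges.Nodup) {a c : V}
    (ha : a ∈ p₁.support) (hc : c ∈ p₁.support) :
    ∃ (A1 : RWalk_s7 H (fun _ _ => True) a c) (A2 : RWalk_s7 H (fun _ _ => True) c a),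
      (∀ e ∈ A1.edgesR, e ∈ p₁.edges) ∧ (∀ e ∈ A2.edgesR, e ∈ p₁.edges) ∧
      (∀ e ∈ A1.edgesR, e ∉ A2.edgesR) := by
  obtain ⟨r, hre, hrs⟩ := RWalk_s7.exists_ofWalk p₁
  have haR : a ∈ r.supp := by rw [hrs]; exact ha
  obtain ⟨s1, s2, hds, hss⟩ := RWalk_s7.exists_split r a haR
  have hedges : s1.edgesR ++ s2.edgesR = p₁.edges := by
    rw [← hre]
    simp [RWalk_s7.edgesR, ← List.map_append, hds]
  by_cases hc2 : c ∈ s2.supp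
  · obtain ⟨t1, t2, hdt, _⟩ := RWalk_s7.exists_split s2 c hc2
    have hedges2 : t1.edgesR ++ t2.edgesR = s2.edgesR := by
      simp [RWalk_s7.edgesR, ← List.map_append, hdt]
    have hall : (s1.edgesR ++ (t1.edgesR ++ t2.edgesR)).Nodup := by
      rw [hedges2, hedges]; exact hnd
    refine ⟨t1, RWalk_s7.appendR t2 s1, ?_, ?_, ?_⟩
    · intro e he
      rw [← hedges, ← hedges2]
      simp only [List.mem_append]
      tauto
    · intro e he
      rw [RWalk_s7.edgesR, RWalk_s7.darts_appendR, List.map_append] at he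
      rcases List.mem_append.mp he with h | h
      · rw [← hedges, ← hedges2]
        simp only [List.mem_append]
        exact Or.inr (Or.inr h)
      · rw [← hedges]
        simp only [List.mem_append]
        exact Or.inl h
    · intro e he hce
      rw [RWalk_s7.edgesR, RWalk_s7.darts_appendR, List.map_append] at hce
      rw [List.nodup_append'] at hall
      have hall2 := hall.2.1
      rw [List.nodup_append'] at hall2
      rcases List.mem_append.mp hce with h | h
      · exact hall2.2.2 he h
      · exact hall.2.2 h (List.mem_append_left _ he)
  · have hc1 : c ∈ s1.supp := by
      have : c ∈ r.supp := by rw [hrs]; exact hc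
      rw [← hss] at this
      rcases List.mem_append.mp this with h | h
      · exact h
      · exact absurd (List.mem_of_mem_tail h) hc2
    obtain ⟨t1, t2, hdt, _⟩ := RWalk_s7.exists_split s1 c hc1
    have hedges2 : t1.edgesR ++ t2.edgesR = s1.edgesR := by
      simp [RWalk_s7.edgesR, ← List.map_append, hdt]
    have hall : ((t1.edgesR ++ t2.edgesR) ++ s2.edgesR).Nodup := by
      rw [hedges2, hedges]; exact hnd
    refine ⟨RWalk_s7.appendR s2 t1, t2, ?_, ?_, ?_⟩
    · intro e he
      rw [RWalk_s7.edgesR, RWalk_s7.darts_appendR, List.map_append] at he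
      rw [← hedges, ← hedges2]
      simp only [List.mem_append]
      rcases List.mem_append.mp he with h | h
      · exact Or.inr h
      · exact Or.inl (Or.inl h)
    · intro e he
      rw [← hedges, ← hedges2]
      simp only [List.mem_append]
      tauto
    · intro e he hce
      rw [RWalk_s7.edgesR, RWalk_s7.darts_appendR, List.map_append] at he
      rw [List.nodup_append'] at hall
      have hall1 := hall.1
      rw [List.nodup_append'] at hall1
      rcases List.mem_append.mp he with h | h
      · exact hall.2.2 (List.mem_append_right _ hce) h
      · exact hall1.2.2 h hce

end Ear
section KeyFinal
open List

lemma key {V E : Type} [Finite V] [Finite E] (H : Multigraph V E) (hL : H.Loopless)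
    (hsep : ∀ a c : V, a ≠ c → ∃ T : Set V, a ∈ T ∧ c ∉ T ∧ (H.delta T).ncard ≤ 2)
    {u₁ u₂ : V} (p₁ : H.Walk u₁ u₁) (p₂ : H.Walk u₂ u₂)
    (h₁ : p₁.IsCycle) (h₂ : p₂.IsCycle) (eS : E) (heS1 : eS ∈ p₁.edges)
    (heS2 : eS ∈ p₂.edges) (d : E) (hd2 : d ∈ p₂.edges) (hd1 : d ∉ p₁.edges) : False := by
  classical
  set V₁ : Set V := {v | v ∈ p₁.support} with hV₁
  set E₁ : Set E := {e | e ∈ p₁.edges} with hE₁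
  have hE : ∀ (e : E) (b : Bool), e ∈ E₁ → dsrc H e b ∈ V₁ := fun e b he =>
    (walk_mem_support_of_edge p₁ e he (inc_dart H e b)).1
  set X := dsrc H eS true with hXdef
  have hX1 : X ∈ V₁ := (walk_mem_support_of_edge p₁ eS heS1 (inc_dart H eS true)).1
  have hX2 : X ∈ p₂.support := (walk_mem_support_of_edge p₂ eS heS2 (inc_dart H eS true)).1
  obtain ⟨W, hperm, hWnd⟩ := exists_rotation p₂ h₂.2.2 X hX2
  obtain ⟨a, c, P, haV, hcV, hPne, hPE, hPs, hPe⟩ :=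
    find_ear V₁ E₁ hE W hX1 hX1 ⟨d, hperm.mem_iff.2 hd2, hd1⟩
  have hac : a ≠ c := by
    rintro rfl
    obtain ⟨tp, htp⟩ := RWalk_s7.supp_eq_cons P
    obtain ⟨lp, hlp⟩ := RWalk_s7.supp_concat P
    have hdne : P.darts ≠ [] := by
      intro hcc
      exact hPne (by simp [RWalk_s7.edgesR, hcc])
    have htpne : tp ≠ [] := by
      intro hcc
      have hls := RWalk_s7.length_supp P
      rw [htp, hcc] at hls
      simp at hls
      exact hdne hls
    have hatp : a ∈ tp := by
      have heq2 : a :: tp = lp ++ [a] := by rw [← htp, hlp]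
      cases lp with
      | nil =>
          simp only [List.nil_append] at heq2
          exact absurd (by injection heq2) htpne.elim
      | cons hd0 tl0 =>
          rw [List.cons_append] at heq2
          injection heq2 with hh ht
          rw [ht]
          simp
    obtain ⟨s, t', hst⟩ := hPs
    obtain ⟨TW, hTW⟩ := RWalk_s7.supp_eq_cons W
    have hWtail : W.supp.tail = TW := by rw [hTW]; rfl
    have hTWnd : TW.Nodup := hWtail ▸ hWnd
    rw [hTW] at hst
    cases s with
    | cons hd0 tl0 =>
        simp only [List.cons_append] at hst
        injection hst with hh ht
        have hsub : P.supp.Sublist TW := by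
          rw [← ht]
          have hinf : P.supp <:+: tl0 ++ P.supp ++ t' := ⟨tl0, t', rfl⟩
          exact hinf.sublist
        have hnd := hTWnd.sublist hsub
        rw [htp] at hnd
        exact absurd hatp (List.nodup_cons.mp hnd).1
    | nil =>
        simp only [List.nil_append] at hst
        rcases List.eq_nil_or_concat t' with ht'nil | ⟨lt, b0, hb0⟩
        · rw [ht'nil, List.append_nil] at hst
          have hsupEq : P.supp = W.supp := by rw [hst, hTW]
          have hlen : P.edgesR.length = W.edgesR.length := by
            have l1 := RWalk_s7.length_supp P
            have l2 := RWalk_s7.length_supp W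
            have e1 : P.edgesR.length = P.darts.length := by simp [RWalk_s7.edgesR]
            have e2 : W.edgesR.length = W.darts.length := by simp [RWalk_s7.edgesR]
            rw [hsupEq] at l1
            omega
          have heq := hPe.sublist.eq_of_length hlen
          have heSW : eS ∈ W.edgesR := hperm.mem_iff.2 heS2
          rw [← heq] at heSW
          exact hPE eS heSW heS1
        · rw [List.concat_eq_append] at hb0
          obtain ⟨lW, hlW⟩ := RWalk_s7.supp_concat W
          have hXlast : P.supp ++ t' = lW ++ [X] := by rw [hst, ← hTW, hlW]
          rw [hb0] at hXlast
          have hrev := congrArg List.reverse hXlast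
          simp only [List.reverse_append, List.reverse_cons, List.reverse_nil,
            List.nil_append, List.cons_append, List.append_assoc,
            List.cons.injEq] at hrev
          have hb0X : b0 = X := by
            first
            | exact hrev.1
            | exact hrev.1.symm
            | (rw [List.cons.injEq] at hrev; exact hrev.1)
          rw [htp, List.cons_append] at hst
          injection hst with haX hTW2
          have hat' : a ∈ t' := by
            rw [hb0]
            exact List.mem_append_right _
              (by rw [haX, hb0X]; exact List.mem_singleton_self _)
          rw [← hTW2] at hTWnd
          exact List.disjoint_of_nodup_append hTWnd hatp hat'
  obtain ⟨A1, A2, hA1E, hA2E, hA12⟩ := exists_arcs p₁ h₁.2.1 haV hcV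
  obtain ⟨T, haT, hcT, hT⟩ := hsep a c hac
  obtain ⟨e1, he1P, he1T⟩ := RWalk_s7.exists_cross T P (fun hiff => hcT (hiff.1 haT))
  obtain ⟨e2, he2P, he2T⟩ := RWalk_s7.exists_cross T A1 (fun hiff => hcT (hiff.1 haT))
  obtain ⟨e3, he3P, he3T⟩ := RWalk_s7.exists_cross T A2 (fun hiff => hcT (hiff.2 haT))
  have h12 : e1 ≠ e2 := fun hcc => hPE e1 he1P (hcc ▸ hA1E e2 he2P)
  have h13 : e1 ≠ e3 := fun hcc => hPE e1 he1P (hcc ▸ hA2E e3 he3P)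
  have h23 : e2 ≠ e3 := fun hcc => hA12 e2 he2P (hcc ▸ he3P)
  have h3 := three_le_ncard_s7 he1T he2T he3T h12 h13 h23
  omega

end KeyFinal
/-- the quotient of G by the 3-edge-connectedness relation is a cactus. -/
theorem quot_tcc_isCactus {V E : Type} [Finite V] [Finite E]
    (G : Multigraph V E) (hG : G.Loopless) :
    (G.quot (tccSetoid G)).IsCactus := by
  classical
  cases nonempty_fintype V
  cases nonempty_fintype E
  intro C₁ hC₁ C₂ hC₂ hne
  by_contra hcap
  rw [← Ne, ← Set.nonempty_iff_ne_empty] at hcap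
  obtain ⟨eS, heS1, heS2⟩ := hcap
  obtain ⟨u₁, p₁, hcyc₁, rfl⟩ := hC₁
  obtain ⟨u₂, p₂, hcyc₂, rfl⟩ := hC₂
  have hL : (G.quot (tccSetoid G)).Loopless := fun ee => ee.2
  have hsep : ∀ a c : Quotient (tccSetoid G), a ≠ c →
      ∃ T, a ∈ T ∧ c ∉ T ∧ ((G.quot (tccSetoid G)).delta T).ncard ≤ 2 :=
    fun a c h => quot_small_cut G a c h
  have hdiff : ∃ d, (d ∈ p₁.edges ∧ d ∉ p₂.edges) ∨ (d ∈ p₂.edges ∧ d ∉ p₁.edges) := by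
    by_contra h
    push_neg at h
    refine hne (Set.ext fun e => ?_)
    have he := h e
    simp only [Set.mem_setOf_eq]
    tauto
  obtain ⟨d, hd⟩ := hdiff
  rcases hd with ⟨hdmem, hdnot⟩ | ⟨hdmem, hdnot⟩
  · exact (key _ hL hsep p₂ p₁ hcyc₂ hcyc₁ eS heS2 heS1 d hdmem hdnot).elim
  · exact (key _ hL hsep p₁ p₂ hcyc₁ hcyc₂ eS heS1 heS2 d hdmem hdnot).elim

end TCW
end
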